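/- arXiv:1405.1593 — 5 statements merged into one kernel-verified Lean document; each statement's English description precedes it below -/
import Mathlib

section
/- Equivalence of nonanticipativity conditions MC2 and MC3 (Lemma 2, part of): the family of conditional-independence conditions "for every i = 0,1,...,n−1, Y_i is conditionally independent of (X_{i+1}, X_{i+2}, ..., X_n) given (X_0,...,X_i, Y_0,...,Y_{i−1})" holds if and only if the family "for every i = 0,1,...,n−1, (Y_0,...,Y_i) is conditionally independent of X_{i+1} given (X_0,...,X_i)" holds. -/
open MeasureTheory ProbabilityTheory

namespace MC23

open MeasurableSpace


variable {Ω : Type*} [mΩ : MeasurableSpace Ω] [StandardBorelSpace Ω]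
  {μ : Measure Ω} [IsProbabilityMeasure μ]

lemma indicator_one_mul (s : Set Ω) (g : Ω → ℝ) :
    s.indicator (fun _ => (1:ℝ)) * g = s.indicator g := by
  funext x; by_cases hx : x ∈ s <;> simp [hx]

lemma sup_eq_generateFrom_inter (b c : MeasurableSpace Ω) :
    b ⊔ c = MeasurableSpace.generateFrom
      {u : Set Ω | ∃ s t, MeasurableSet[b] s ∧ MeasurableSet[c] t ∧ u = s ∩ t} := by
  refine le_antisymm (sup_le ?_ ?_) (MeasurableSpace.generateFrom_le ?_)
  · exact fun s hs => measurableSet_generateFrom ⟨s, Set.univ, hs, MeasurableSet.univ,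
      (Set.inter_univ s).symm⟩
  · exact fun t ht => measurableSet_generateFrom ⟨Set.univ, t, MeasurableSet.univ, ht,
      (Set.univ_inter t).symm⟩
  · rintro u ⟨s, t, hs, ht, rfl⟩
    exact MeasurableSet.inter ((le_sup_left : b ≤ b ⊔ c) _ hs)
      ((le_sup_right : c ≤ b ⊔ c) _ ht)

lemma isPiSystem_inter (b c : MeasurableSpace Ω) :
    IsPiSystem {u : Set Ω | ∃ s t, MeasurableSet[b] s ∧ MeasurableSet[c] t ∧ u = s ∩ t} := by
  rintro u ⟨s₁, t₁, hs₁, ht₁, rfl⟩ v ⟨s₂, t₂, hs₂, ht₂, rfl⟩ -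
  exact ⟨s₁ ∩ s₂, t₁ ∩ t₂, hs₁.inter hs₂, ht₁.inter ht₂, by rw [Set.inter_inter_inter_comm]⟩

/-- Forward direction of the conditional-expectation characterization. -/
lemma condexp_sup_eq_of_condIndep {a b c : MeasurableSpace Ω}
    (hc : c ≤ mΩ) (ha : a ≤ mΩ) (hb : b ≤ mΩ)
    (h : CondIndep c a b hc μ) {s : Set Ω} (hs : MeasurableSet[a] s) :
    μ⟦s | b ⊔ c⟧ =ᵐ[μ] μ⟦s | c⟧ := by
  letI : MeasurableSpace Ω := mΩ
  have hbc : b ⊔ c ≤ mΩ := sup_le hb hc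
  rw [condIndep_iff c a b hc ha hb] at h
  have hind : Integrable (s.indicator (fun _ => (1:ℝ))) μ :=
    (integrable_const 1).indicator (ha s hs)
  refine (ae_eq_condExp_of_forall_setIntegral_eq hbc hind
    (fun t _ _ => integrable_condExp.integrableOn) ?_
    (StronglyMeasurable.aestronglyMeasurable
      (stronglyMeasurable_condExp.mono le_sup_right))).symm
  have key : ∀ t : Set Ω, MeasurableSet[b ⊔ c] t →
      ∫ x in t, (μ⟦s | c⟧) x ∂μ = ∫ x in t, s.indicator (fun _ => (1:ℝ)) x ∂μ := by
    refine MeasurableSpace.induction_on_inter (m := b ⊔ c)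
      (C := fun t _ => ∫ x in t, (μ⟦s | c⟧) x ∂μ = ∫ x in t, s.indicator (fun _ => (1:ℝ)) x ∂μ)
      (sup_eq_generateFrom_inter b c) (isPiSystem_inter b c) ?_ ?_ ?_ ?_
    · simp
    · rintro u ⟨t₁, t₂, ht₁, ht₂, rfl⟩
      have ht₁' : MeasurableSet t₁ := hb _ ht₁
      have ht₂' : MeasurableSet[c] t₂ := ht₂
      -- LHS
      have l1 : ∫ x in t₁ ∩ t₂, (μ⟦s | c⟧) x ∂μ
          = ∫ x in t₂, (t₁.indicator (μ⟦s | c⟧)) x ∂μ := by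
        rw [setIntegral_indicator ht₁', Set.inter_comm]
      have hmul : t₁.indicator (μ⟦s | c⟧)
          = (μ⟦s | c⟧) * t₁.indicator (fun _ => (1:ℝ)) := by
        funext x; by_cases hx : x ∈ t₁ <;> simp [hx]
      have hint_mul : Integrable ((μ⟦s | c⟧) * t₁.indicator (fun _ => (1:ℝ))) μ := by
        rw [← hmul]
        exact integrable_condExp.indicator ht₁'
      have l2 : ∫ x in t₂, (t₁.indicator (μ⟦s | c⟧)) x ∂μ
          = ∫ x in t₂, (μ[(μ⟦s | c⟧) * t₁.indicator (fun _ => (1:ℝ)) | c]) x ∂μ := by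
        rw [setIntegral_condExp hc hint_mul ht₂']
        simp_rw [hmul]
      have pull : μ[(μ⟦s | c⟧) * t₁.indicator (fun _ => (1:ℝ)) | c]
          =ᵐ[μ] (μ⟦s | c⟧) * μ⟦t₁ | c⟧ :=
        condExp_mul_of_stronglyMeasurable_left stronglyMeasurable_condExp hint_mul
          ((integrable_const 1).indicator ht₁')
      -- RHS
      have r1 : ∫ x in t₁ ∩ t₂, s.indicator (fun _ => (1:ℝ)) x ∂μ
          = ∫ x in t₂, ((s ∩ t₁).indicator (fun _ => (1:ℝ))) x ∂μ := by
        rw [Set.inter_comm s t₁, ← Set.indicator_indicator,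
          setIntegral_indicator ht₁', Set.inter_comm]
      have r2 : ∫ x in t₂, ((s ∩ t₁).indicator (fun _ => (1:ℝ))) x ∂μ
          = ∫ x in t₂, (μ⟦s ∩ t₁ | c⟧) x ∂μ := by
        rw [setIntegral_condExp hc ((integrable_const 1).indicator
          ((ha s hs).inter ht₁')) ht₂']
      rw [l1, l2, r1, r2]
      refine setIntegral_congr_ae (hc _ ht₂') ?_
      filter_upwards [pull, h s t₁ hs ht₁] with x h1 h2 _
      rw [h1, h2]
    · intro t htm iht
      have ht' : MeasurableSet t := hbc _ htm
      have e1 := integral_add_compl ht' (integrable_condExp (m := c) (f := s.indicator (fun _ => (1:ℝ))) (μ := μ))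
      have e2 := integral_add_compl ht' hind
      have etot : ∫ x, (μ⟦s | c⟧) x ∂μ = ∫ x, s.indicator (fun _ => (1:ℝ)) x ∂μ :=
        integral_condExp hc
      linarith
    · intro f hdisj hmeas ihf
      have hf' : ∀ i, MeasurableSet (f i) := fun i => hbc _ (hmeas i)
      rw [integral_iUnion hf' hdisj integrable_condExp.integrableOn,
        integral_iUnion hf' hdisj hind.integrableOn]
      exact tsum_congr ihf
  exact fun t ht _ => key t ht

/-- Reverse direction of the conditional-expectation characterization. -/
lemma condIndep_of_condexp_sup_eq {a b c : MeasurableSpace Ω}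
    (hc : c ≤ mΩ) (ha : a ≤ mΩ) (hb : b ≤ mΩ)
    (h : ∀ s : Set Ω, MeasurableSet[a] s → μ⟦s | b ⊔ c⟧ =ᵐ[μ] μ⟦s | c⟧) :
    CondIndep c a b hc μ := by
  letI : MeasurableSpace Ω := mΩ
  have hbc : b ⊔ c ≤ mΩ := sup_le hb hc
  rw [condIndep_iff c a b hc ha hb]
  intro s t hs ht
  have hs' : MeasurableSet s := ha s hs
  have ht' : MeasurableSet t := hb t ht
  have hindt : Integrable (t.indicator (fun _ => (1:ℝ))) μ :=
    (integrable_const 1).indicator ht'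
  have hinds : Integrable (s.indicator (fun _ => (1:ℝ))) μ :=
    (integrable_const 1).indicator hs'
  have e0 : (s ∩ t).indicator (fun _ => (1:ℝ))
      = t.indicator (fun _ => (1:ℝ)) * s.indicator (fun _ => (1:ℝ)) := by
    rw [indicator_one_mul, Set.indicator_indicator, Set.inter_comm]
  have hint_ts : Integrable (t.indicator (fun _ => (1:ℝ)) * s.indicator (fun _ => (1:ℝ))) μ := by
    rw [← e0]; exact (integrable_const 1).indicator (hs'.inter ht')
  -- tower
  have tower : μ[μ[t.indicator (fun _ => (1:ℝ)) * s.indicator (fun _ => (1:ℝ)) | b ⊔ c] | c]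
      =ᵐ[μ] μ⟦s ∩ t | c⟧ := by
    rw [e0]
    exact condExp_condExp_of_le le_sup_right hbc
  -- pull out at level b ⊔ c
  have pull1 : μ[t.indicator (fun _ => (1:ℝ)) * s.indicator (fun _ => (1:ℝ)) | b ⊔ c]
      =ᵐ[μ] t.indicator (fun _ => (1:ℝ)) * μ⟦s | b ⊔ c⟧ :=
    condExp_mul_of_stronglyMeasurable_left
      ((stronglyMeasurable_const.indicator ht).mono le_sup_left) hint_ts hinds
  have step : μ[t.indicator (fun _ => (1:ℝ)) * s.indicator (fun _ => (1:ℝ)) | b ⊔ c]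
      =ᵐ[μ] (μ⟦s | c⟧) * t.indicator (fun _ => (1:ℝ)) := by
    filter_upwards [pull1, h s hs] with x h1 h2
    rw [h1]; simp only [Pi.mul_apply]; rw [h2]; ring
  have hint2 : Integrable ((μ⟦s | c⟧) * t.indicator (fun _ => (1:ℝ))) μ := by
    have : (μ⟦s | c⟧) * t.indicator (fun _ => (1:ℝ)) = t.indicator (μ⟦s | c⟧) := by
      funext x; by_cases hx : x ∈ t <;> simp [hx]
    rw [this]; exact integrable_condExp.indicator ht'
  have pull2 : μ[(μ⟦s | c⟧) * t.indicator (fun _ => (1:ℝ)) | c]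
      =ᵐ[μ] (μ⟦s | c⟧) * μ⟦t | c⟧ :=
    condExp_mul_of_stronglyMeasurable_left stronglyMeasurable_condExp hint2 hindt
  calc μ⟦s ∩ t | c⟧
      =ᵐ[μ] μ[μ[t.indicator (fun _ => (1:ℝ)) * s.indicator (fun _ => (1:ℝ)) | b ⊔ c] | c] :=
        tower.symm
    _ =ᵐ[μ] μ[(μ⟦s | c⟧) * t.indicator (fun _ => (1:ℝ)) | c] := condExp_congr_ae step
    _ =ᵐ[μ] (μ⟦s | c⟧) * μ⟦t | c⟧ := pull2


section Graphoid
variable {a a' b b' c c' d : MeasurableSpace Ω}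

lemma condIndep_congr (hc : c ≤ mΩ) (hc' : c' ≤ mΩ) (e : c = c')
    (h : CondIndep c a b hc μ) : CondIndep c' a b hc' μ := by subst e; exact h

lemma condIndep_congr_iff (hc : c ≤ mΩ) (hc' : c' ≤ mΩ) (ec : c = c') (ea : a = a')
    (eb : b = b') : CondIndep c a b hc μ ↔ CondIndep c' a' b' hc' μ := by
  subst ec; subst ea; subst eb; exact Iff.rfl

lemma condIndep_symm (hc : c ≤ mΩ) (h : CondIndep c a b hc μ) : CondIndep c b a hc μ :=
  Kernel.Indep.symm h

lemma condIndep_mono (hc : c ≤ mΩ) (ha : a ≤ mΩ) (hb : b ≤ mΩ)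
    (ha' : a' ≤ a) (hb' : b' ≤ b)
    (h : CondIndep c a b hc μ) : CondIndep c a' b' hc μ := by
  letI : MeasurableSpace Ω := mΩ
  rw [condIndep_iff c a b hc ha hb] at h
  rw [condIndep_iff c a' b' hc (ha'.trans ha) (hb'.trans hb)]
  exact fun s t hs ht => h s t (ha' s hs) (hb' t ht)

/-- Weak union: `a ⫫ (b ⊔ d) | c` implies `a ⫫ d | (c ⊔ b)`. -/
lemma condIndep_weak_union (hc : c ≤ mΩ) (ha : a ≤ mΩ) (hb : b ≤ mΩ) (hd : d ≤ mΩ)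
    (h : CondIndep c a (b ⊔ d) hc μ) : CondIndep (c ⊔ b) a d (sup_le hc hb) μ := by
  letI : MeasurableSpace Ω := mΩ
  refine condIndep_of_condexp_sup_eq (sup_le hc hb) ha hd (fun s hs => ?_)
  have key : μ⟦s | (b ⊔ d) ⊔ c⟧ =ᵐ[μ] μ⟦s | c⟧ :=
    condexp_sup_eq_of_condIndep hc ha (sup_le hb hd) h hs
  have e2 : μ⟦s | c ⊔ b⟧ =ᵐ[μ] μ⟦s | c⟧ := by
    have tow : μ[μ⟦s | (b ⊔ d) ⊔ c⟧ | c ⊔ b] =ᵐ[μ] μ⟦s | c ⊔ b⟧ :=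
      condExp_condExp_of_le (sup_le le_sup_right (le_sup_left.trans le_sup_left)
        : c ⊔ b ≤ (b ⊔ d) ⊔ c) (sup_le (sup_le hb hd) hc)
    calc μ⟦s | c ⊔ b⟧ =ᵐ[μ] μ[μ⟦s | (b ⊔ d) ⊔ c⟧ | c ⊔ b] := tow.symm
      _ =ᵐ[μ] μ[μ⟦s | c⟧ | c ⊔ b] := condExp_congr_ae key
      _ =ᵐ[μ] μ⟦s | c⟧ := by
          rw [condExp_of_stronglyMeasurable (sup_le hc hb)
            (stronglyMeasurable_condExp.mono le_sup_left) integrable_condExp]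
  have e1 : d ⊔ (c ⊔ b) = (b ⊔ d) ⊔ c := by ac_rfl
  rw [e1]
  exact key.trans e2.symm

/-- Contraction: `a ⫫ b | c` and `a ⫫ d | (c ⊔ b)` imply `a ⫫ (b ⊔ d) | c`. -/
lemma condIndep_contraction (hc : c ≤ mΩ) (ha : a ≤ mΩ) (hb : b ≤ mΩ) (hd : d ≤ mΩ)
    (h1 : CondIndep c a b hc μ)
    (h2 : CondIndep (c ⊔ b) a d (sup_le hc hb) μ) : CondIndep c a (b ⊔ d) hc μ := by
  letI : MeasurableSpace Ω := mΩ
  refine condIndep_of_condexp_sup_eq hc ha (sup_le hb hd) fun s hs => ?_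
  have k2 : μ⟦s | d ⊔ (c ⊔ b)⟧ =ᵐ[μ] μ⟦s | c ⊔ b⟧ :=
    condexp_sup_eq_of_condIndep (sup_le hc hb) ha hd h2 hs
  have k1 : μ⟦s | b ⊔ c⟧ =ᵐ[μ] μ⟦s | c⟧ :=
    condexp_sup_eq_of_condIndep hc ha hb h1 hs
  have e : (b ⊔ d) ⊔ c = d ⊔ (c ⊔ b) := by ac_rfl
  rw [e]
  refine k2.trans ?_
  rw [show c ⊔ b = b ⊔ c from sup_comm c b]
  exact k1

end Graphoid

/-! ### Families of σ-algebras indexed by ℕ -/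

/-- `⨆ j ∈ [a, b), m j`. -/
def SI (m : ℕ → MeasurableSpace Ω) (a b : ℕ) : MeasurableSpace Ω := ⨆ j ∈ Set.Ico a b, m j

/-- `⨆ j < k, m j`. -/
def SR (m : ℕ → MeasurableSpace Ω) (k : ℕ) : MeasurableSpace Ω := SI m 0 k

omit mΩ [StandardBorelSpace Ω] in
lemma SR_def (m : ℕ → MeasurableSpace Ω) (k : ℕ) : SR m k = SI m 0 k := rfl

omit [StandardBorelSpace Ω] in
lemma SI_le {m : ℕ → MeasurableSpace Ω} {M : MeasurableSpace Ω} (h : ∀ i, m i ≤ M)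
    {a b : ℕ} : SI m a b ≤ M := iSup₂_le fun j _ => h j

omit [StandardBorelSpace Ω] in
lemma SR_le {m : ℕ → MeasurableSpace Ω} {M : MeasurableSpace Ω} (h : ∀ i, m i ≤ M)
    {k : ℕ} : SR m k ≤ M := SI_le h

omit mΩ [StandardBorelSpace Ω] in
lemma SI_single (m : ℕ → MeasurableSpace Ω) (a : ℕ) : SI m a (a + 1) = m a := by
  rw [SI, show Set.Ico a (a+1) = {a} by ext x; simp; omega, iSup_singleton]

omit mΩ [StandardBorelSpace Ω] in
lemma SI_split (m : ℕ → MeasurableSpace Ω) {a b c : ℕ} (hab : a ≤ b) (hbc : b ≤ c) :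
    SI m a c = SI m a b ⊔ SI m b c := by
  rw [SI, SI, SI, ← iSup_union, Set.Ico_union_Ico_eq_Ico hab hbc]

omit mΩ [StandardBorelSpace Ω] in
lemma SR_zero (m : ℕ → MeasurableSpace Ω) : SR m 0 = ⊥ := by
  simp [SR, SI]

omit mΩ [StandardBorelSpace Ω] in
lemma SR_succ (m : ℕ → MeasurableSpace Ω) (k : ℕ) : SR m (k + 1) = SR m k ⊔ m k := by
  rw [SR_def, SR_def, SI_split m (Nat.zero_le k) (Nat.le_succ k), SI_single]

omit mΩ [StandardBorelSpace Ω] in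
lemma SR_mono (m : ℕ → MeasurableSpace Ω) {k l : ℕ} (h : k ≤ l) : SR m k ≤ SR m l := by
  rw [SR_def, SR_def]
  exact iSup₂_le fun j hj => le_iSup₂ (f := fun j _ => m j) j
    (Set.mem_Ico.mpr ⟨Nat.zero_le j, lt_of_lt_of_le (Set.mem_Ico.mp hj).2 h⟩)

omit mΩ [StandardBorelSpace Ω] in
lemma le_SI (m : ℕ → MeasurableSpace Ω) {a b j : ℕ} (h1 : a ≤ j) (h2 : j < b) :
    m j ≤ SI m a b := le_iSup₂ (f := fun j _ => m j) j (Set.mem_Ico.mpr ⟨h1, h2⟩)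

/-- Abstract form of MC2 ⇔ MC3 for families of σ-algebras. -/
theorem abstract_mc (n : ℕ) (mx my : ℕ → MeasurableSpace Ω)
    (hx : ∀ i, mx i ≤ mΩ) (hy : ∀ i, my i ≤ mΩ) :
    (∀ i, i < n → CondIndep (SR mx (i+1) ⊔ SR my i) (my i) (SI mx (i+1) (n+1))
        (sup_le (SR_le hx) (SR_le hy)) μ) ↔
    (∀ i, i < n → CondIndep (SR mx (i+1)) (SR my (i+1)) (mx (i+1))
        (SR_le hx) μ) := by
  constructor
  · intro mc2
    have C : ∀ i, i < n → CondIndep (SR mx (i+1)) (SI mx (i+1) (n+1)) (SR my (i+1))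
        (SR_le hx) μ := by
      intro i
      induction i with
      | zero =>
        intro h0
        have h' : CondIndep (SR mx 1) (my 0) (SI mx 1 (n+1)) (SR_le hx) μ :=
          condIndep_congr _ _ (by rw [SR_zero, sup_bot_eq]) (mc2 0 h0)
        have h'' := condIndep_symm _ h'
        rw [show SR my (0+1) = my 0 by rw [SR_succ, SR_zero, bot_sup_eq]]
        exact h''
      | succ i ih =>
        intro hi1
        have hi : i < n := Nat.lt_of_succ_lt hi1
        have ci := condIndep_symm _ (ih hi)
        rw [SI_split mx (Nat.le_succ (i+1)) (show i+2 ≤ n+1 by omega), SI_single] at ci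
        have wu := condIndep_weak_union (SR_le hx) (SR_le hy) (hx (i+1))
          (SI_le hx) ci
        have wu' : CondIndep (SR mx (i+2)) (SR my (i+1)) (SI mx (i+2) (n+1))
            (SR_le hx) μ :=
          condIndep_congr _ _ (SR_succ mx (i+1)).symm wu
        have h1 := condIndep_symm _ wu'
        have h2 := condIndep_symm _ (mc2 (i+1) hi1)
        have ct := condIndep_contraction (SR_le hx) (SI_le hx) (SR_le hy)
          (hy (i+1)) h1 h2
        rw [SR_succ my (i+1)]
        exact ct
    intro i hi
    have := condIndep_symm _ (C i hi)
    exact condIndep_mono (SR_le hx) (SR_le hy) (SI_le hx) le_rfl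
      (le_SI mx le_rfl (by omega)) this
  · intro mc3
    have D : ∀ i, i < n → ∀ k, i < k → k ≤ n →
        CondIndep (SR mx (i+1)) (SR my (i+1)) (SI mx (i+1) (k+1)) (SR_le hx) μ := by
      intro i hi k
      induction k with
      | zero => omega
      | succ k ihk =>
        intro hik hk1n
        rcases Nat.lt_or_ge i k with hltk | hgek
        · have ih := ihk hltk (by omega)
          have m3 := mc3 k (by omega)
          have m3' := condIndep_mono (SR_le hx) (SR_le hy) (hx (k+1))
            (SR_mono my (show i+1 ≤ k+1 by omega)) le_rfl m3
          have m3'' : CondIndep (SR mx (i+1) ⊔ SI mx (i+1) (k+1)) (SR my (i+1)) (mx (k+1))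
              (sup_le (SR_le hx) (SI_le hx)) μ :=
            condIndep_congr _ _ (by rw [SR_def, SR_def, ← SI_split mx (Nat.zero_le (i+1)) (show i+1 ≤ k+1 by omega)]) m3'
          have ct := condIndep_contraction (SR_le hx) (SR_le hy) (SI_le hx)
            (hx (k+1)) ih m3''
          rw [SI_split mx (show i+1 ≤ k+1 by omega) (Nat.le_succ (k+1)), SI_single]
          exact ct
        · have hik' : i = k := by omega
          subst hik'
          rw [SI_single]
          exact mc3 i (by omega)
    intro i hi
    have d := condIndep_symm _ (D i hi n hi (le_refl n))
    rw [SR_succ my i] at d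
    have wu := condIndep_weak_union (SR_le hx) (SI_le hx) (SR_le hy) (hy i) d
    exact condIndep_symm _ wu


section Comap
variable {ι : Type*}

omit [StandardBorelSpace Ω] in
lemma comap_pi {β : ι → Type*} [m : ∀ i, MeasurableSpace (β i)] (f : ∀ i, Ω → β i) :
    MeasurableSpace.comap (fun ω (i : ι) => f i ω) MeasurableSpace.pi
      = ⨆ i, (m i).comap (f i) := by
  simp_rw [MeasurableSpace.pi, MeasurableSpace.comap_iSup, MeasurableSpace.comap_comp,
    Function.comp_def]

omit [StandardBorelSpace Ω] in
lemma comap_prodMk {β γ : Type*} [mβ : MeasurableSpace β] [mγ : MeasurableSpace γ]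
    (f : Ω → β) (g : Ω → γ) :
    MeasurableSpace.comap (fun ω => (f ω, g ω)) inferInstance
      = mβ.comap f ⊔ mγ.comap g := by
  rw [show (inferInstance : MeasurableSpace (β × γ))
      = mβ.comap Prod.fst ⊔ mγ.comap Prod.snd from rfl,
    MeasurableSpace.comap_sup, MeasurableSpace.comap_comp, MeasurableSpace.comap_comp]
  rfl

omit mΩ [StandardBorelSpace Ω] in
lemma iSup_fin (m : ℕ → MeasurableSpace Ω) (k : ℕ) :
    (⨆ j : Fin k, m j) = SR m k := by
  rw [SR_def]
  apply le_antisymm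
  · exact iSup_le fun j => le_SI m (Nat.zero_le _) j.isLt
  · refine iSup₂_le fun j hj => ?_
    exact le_iSup (fun j : Fin k => m j) ⟨j, (Set.mem_Ico.mp hj).2⟩

omit mΩ [StandardBorelSpace Ω] in
lemma iSup_fin_shift (m : ℕ → MeasurableSpace Ω) {i n : ℕ} (h : i < n) :
    (⨆ j : Fin (n - i), m (i + 1 + ↑j)) = SI m (i+1) (n+1) := by
  apply le_antisymm
  · refine iSup_le fun j => le_SI m (by omega) ?_
    have := j.isLt; omega
  · refine iSup₂_le fun j hj => ?_
    have hj' := Set.mem_Ico.mp hj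
    have e : i + 1 + (j - (i+1)) = j := by omega
    calc m j = m (i + 1 + (j - (i+1))) := by rw [e]
    _ ≤ _ := le_iSup (fun t : Fin (n-i) => m (i+1+↑t)) ⟨j - (i+1), by omega⟩

omit [StandardBorelSpace Ω] in
lemma comap_tuple_eq_SR {𝒳 : ℕ → Type*} [∀ i, MeasurableSpace (𝒳 i)] (X : ∀ i, Ω → 𝒳 i)
    (k : ℕ) :
    MeasurableSpace.comap (fun ω => fun j : Fin k => X j ω) inferInstance
      = SR (fun t => MeasurableSpace.comap (X t) inferInstance) k := by
  rw [comap_pi]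
  exact iSup_fin (fun t => MeasurableSpace.comap (X t) inferInstance) k

omit [StandardBorelSpace Ω] in
lemma comap_future_eq_SI {𝒳 : ℕ → Type*} [∀ i, MeasurableSpace (𝒳 i)] (X : ∀ i, Ω → 𝒳 i)
    {i n : ℕ} (h : i < n) :
    MeasurableSpace.comap (fun ω => fun j : Fin (n - i) => X (i + 1 + ↑j) ω) inferInstance
      = SI (fun t => MeasurableSpace.comap (X t) inferInstance) (i+1) (n+1) := by
  rw [comap_pi]
  exact iSup_fin_shift (fun t => MeasurableSpace.comap (X t) inferInstance) h

omit [StandardBorelSpace Ω] in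
lemma comap_pair_tuple {𝒳 𝒴 : ℕ → Type*} [∀ i, MeasurableSpace (𝒳 i)]
    [∀ i, MeasurableSpace (𝒴 i)] (X : ∀ i, Ω → 𝒳 i) (Y : ∀ i, Ω → 𝒴 i) (k l : ℕ) :
    MeasurableSpace.comap
        (fun ω => ((fun j : Fin k => X j ω), (fun j : Fin l => Y j ω))) inferInstance
      = SR (fun t => MeasurableSpace.comap (X t) inferInstance) k
        ⊔ SR (fun t => MeasurableSpace.comap (Y t) inferInstance) l := by
  rw [comap_prodMk, comap_tuple_eq_SR, comap_tuple_eq_SR]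

end Comap

end MC23

/-- **Equivalence of nonanticipativity conditions MC2 and MC3** (Lemma 2, part of):
for processes `X_0, …, X_n` and `Y_0, …, Y_n` on a probability space, the family of conditions
"for every `i < n`, `Y_i` is conditionally independent of `(X_{i+1}, …, X_n)` given
`(X_0, …, X_i, Y_0, …, Y_{i-1})`" holds iff the family
"for every `i < n`, `(Y_0, …, Y_i)` is conditionally independent of `X_{i+1}` given
`(X_0, …, X_i)`" holds. -/
theorem mc2_iff_mc3
    {Ω : Type*} [MeasurableSpace Ω] [StandardBorelSpace Ω] [Nonempty Ω]
    (P : Measure Ω) [IsProbabilityMeasure P]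
    (n : ℕ)
    (𝒳 𝒴 : ℕ → Type*)
    [∀ i, MeasurableSpace (𝒳 i)] [∀ i, StandardBorelSpace (𝒳 i)]
    [∀ i, MeasurableSpace (𝒴 i)] [∀ i, StandardBorelSpace (𝒴 i)]
    (X : ∀ i, Ω → 𝒳 i) (Y : ∀ i, Ω → 𝒴 i)
    (hX : ∀ i, Measurable (X i)) (hY : ∀ i, Measurable (Y i)) :
    -- MC2 : for every `i < n`, `Y_i ⫫ (X_{i+1}, …, X_n) | (X^i, Y^{i-1})`
    (∀ i < n,
      CondIndepFun
        (MeasurableSpace.comap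
          (fun ω => ((fun j : Fin (i + 1) => X j ω), (fun j : Fin i => Y j ω)))
          inferInstance)
        ((Measurable.prodMk
            (measurable_pi_lambda _ fun j : Fin (i + 1) => hX j)
            (measurable_pi_lambda _ fun j : Fin i => hY j)).comap_le)
        (Y i) (fun ω => fun j : Fin (n - i) => X (i + 1 + j) ω) P)
    ↔
    -- MC3 : for every `i < n`, `(Y_0, …, Y_i) ⫫ X_{i+1} | (X_0, …, X_i)`
    (∀ i < n,
      CondIndepFun
        (MeasurableSpace.comap (fun ω => fun j : Fin (i + 1) => X j ω) inferInstance)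
        ((measurable_pi_lambda _ fun j : Fin (i + 1) => hX j).comap_le)
        (fun ω => fun j : Fin (i + 1) => Y j ω) (X (i + 1)) P) := by
  have hx : ∀ i, MeasurableSpace.comap (X i) inferInstance ≤ ‹MeasurableSpace Ω› :=
    fun i => (hX i).comap_le
  have hy : ∀ i, MeasurableSpace.comap (Y i) inferInstance ≤ ‹MeasurableSpace Ω› :=
    fun i => (hY i).comap_le
  have key := MC23.abstract_mc (μ := P) n
    (fun t => MeasurableSpace.comap (X t) inferInstance)
    (fun t => MeasurableSpace.comap (Y t) inferInstance) hx hy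
  constructor
  · intro h i hi
    have h2 : ∀ i, i < n →
        CondIndep (MC23.SR (fun t => MeasurableSpace.comap (X t) inferInstance) (i+1)
            ⊔ MC23.SR (fun t => MeasurableSpace.comap (Y t) inferInstance) i)
          (MeasurableSpace.comap (Y i) inferInstance)
          (MC23.SI (fun t => MeasurableSpace.comap (X t) inferInstance) (i+1) (n+1))
          (sup_le (MC23.SR_le hx) (MC23.SR_le hy)) P := by
      intro i hi
      refine (MC23.condIndep_congr_iff
        ((MC23.comap_pair_tuple X Y (i+1) i).trans_le
          (sup_le (MC23.SR_le hx) (MC23.SR_le hy)))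
        (sup_le (MC23.SR_le hx) (MC23.SR_le hy))
        (MC23.comap_pair_tuple X Y (i+1) i) rfl
        (MC23.comap_future_eq_SI X hi)).mp ?_
      exact (condIndepFun_iff_condIndep _ _ _ _ P).mp (h i hi)
    have h3 := key.mp h2 i hi
    refine (condIndepFun_iff_condIndep _ _ _ _ P).mpr ?_
    exact (MC23.condIndep_congr_iff (MC23.SR_le hx)
      ((MC23.comap_tuple_eq_SR X (i+1)).trans_le (MC23.SR_le hx))
      (MC23.comap_tuple_eq_SR X (i+1)).symm
      (MC23.comap_tuple_eq_SR Y (i+1)).symm rfl).mp h3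
  · intro h i hi
    have h3 : ∀ i, i < n →
        CondIndep (MC23.SR (fun t => MeasurableSpace.comap (X t) inferInstance) (i+1))
          (MC23.SR (fun t => MeasurableSpace.comap (Y t) inferInstance) (i+1))
          (MeasurableSpace.comap (X (i+1)) inferInstance)
          (MC23.SR_le hx) P := by
      intro i hi
      refine (MC23.condIndep_congr_iff
        ((MC23.comap_tuple_eq_SR X (i+1)).trans_le (MC23.SR_le hx))
        (MC23.SR_le hx)
        (MC23.comap_tuple_eq_SR X (i+1))
        (MC23.comap_tuple_eq_SR Y (i+1)) rfl).mp ?_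
      exact (condIndepFun_iff_condIndep _ _ _ _ P).mp (h i hi)
    have h2 := key.mpr h3 i hi
    refine (condIndepFun_iff_condIndep _ _ _ _ P).mpr ?_
    exact (MC23.condIndep_congr_iff (sup_le (MC23.SR_le hx) (MC23.SR_le hy))
      ((MC23.comap_pair_tuple X Y (i+1) i).trans_le
        (sup_le (MC23.SR_le hx) (MC23.SR_le hy)))
      (MC23.comap_pair_tuple X Y (i+1) i).symm rfl
      (MC23.comap_future_eq_SI X hi).symm).mp h2
end

section
/- Equivalence of nonanticipativity conditions MC3 and MC4 (Lemma 2, part of): the family of conditional-independence conditions "for every i = 0,1,...,n−1, (Y_0,...,Y_i) is conditionally independent of X_{i+1} given (X_0,...,X_i)" holds if and only if the family "for every i = 0,1,...,n−1, (X_{i+1}, X_{i+2}, ..., X_n) is conditionally independent of (Y_0,...,Y_i) given (X_0,...,X_i)" holds. -/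
open MeasureTheory ProbabilityTheory

theorem condIndepFun_iff_condexp_doob
    {Ω β γ : Type*} {m' : MeasurableSpace Ω}
    [mΩ : MeasurableSpace Ω] [StandardBorelSpace Ω]
    {μ : Measure Ω} [IsProbabilityMeasure μ]
    [mβ : MeasurableSpace β] [mγ : MeasurableSpace γ]
    {f : Ω → β} {g : Ω → γ}
    (hm' : m' ≤ mΩ) (hf : Measurable f) (hg : Measurable g) :
    CondIndepFun m' hm' f g μ ↔
      ∀ t, MeasurableSet t →
        (μ⟦g ⁻¹' t | m' ⊔ MeasurableSpace.comap f mβ⟧) =ᵐ[μ] μ⟦g ⁻¹' t | m'⟧ := by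
  have hm'' : m' ⊔ MeasurableSpace.comap f mβ ≤ mΩ := sup_le hm' hf.comap_le
  constructor
  · intro h t ht
    have hB : MeasurableSet (g ⁻¹' t) := hg ht
    have hprod := (condIndepFun_iff_condExp_inter_preimage_eq_mul hf hg).mp h
    have hint : Integrable ((g ⁻¹' t).indicator fun _ => (1:ℝ)) μ :=
      (integrable_const 1).indicator hB
    symm
    have hgen : m' ⊔ MeasurableSpace.comap f mβ = MeasurableSpace.generateFrom
        {A : Set Ω | ∃ s u, MeasurableSet[m'] s ∧ MeasurableSet u ∧ A = s ∩ f ⁻¹' u} := by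
      refine le_antisymm (sup_le ?_ ?_) (MeasurableSpace.generateFrom_le ?_)
      · intro s hs
        exact MeasurableSpace.measurableSet_generateFrom
          ⟨s, Set.univ, hs, MeasurableSet.univ, by simp⟩
      · rintro _ ⟨u, hu, rfl⟩
        exact MeasurableSpace.measurableSet_generateFrom
          ⟨Set.univ, u, MeasurableSet.univ, hu, by simp⟩
      · rintro _ ⟨s, u, hs, hu, rfl⟩
        exact ((le_sup_left : m' ≤ m' ⊔ MeasurableSpace.comap f mβ) s hs).inter
          ((le_sup_right : MeasurableSpace.comap f mβ ≤ m' ⊔ MeasurableSpace.comap f mβ)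
            _ ⟨u, hu, rfl⟩)
    have hpi : IsPiSystem
        {A : Set Ω | ∃ s u, MeasurableSet[m'] s ∧ MeasurableSet u ∧ A = s ∩ f ⁻¹' u} := by
      rintro _ ⟨s₁, u₁, hs₁, hu₁, rfl⟩ _ ⟨s₂, u₂, hs₂, hu₂, rfl⟩ _
      refine ⟨s₁ ∩ s₂, u₁ ∩ u₂, hs₁.inter hs₂, hu₁.inter hu₂, ?_⟩
      rw [Set.preimage_inter]; ext x; simp only [Set.mem_inter_iff]; tauto
    refine ae_eq_condExp_of_forall_setIntegral_eq hm'' hint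
      (fun s _ _ => integrable_condExp.integrableOn) (fun A hA _ => ?_)
      (StronglyMeasurable.mono (stronglyMeasurable_condExp (m := m') (μ := μ)
        (f := (g ⁻¹' t).indicator fun _ => (1:ℝ)))
        (le_sup_left : m' ≤ m' ⊔ MeasurableSpace.comap f mβ)).aestronglyMeasurable (μ := μ)
    refine MeasurableSpace.induction_on_inter (m := m' ⊔ MeasurableSpace.comap f mβ)
      (C := fun A _ => ∫ x in A, (μ⟦g ⁻¹' t|m'⟧) x ∂μ
        = ∫ x in A, ((g ⁻¹' t).indicator fun _ => (1:ℝ)) x ∂μ)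
      hgen hpi (by simp) ?_ ?_ ?_ A hA
    · -- basic sets
      rintro _ ⟨s, u, hs, hu, rfl⟩
      have hs0 : MeasurableSet s := hm' s hs
      have hu0 : MeasurableSet (f ⁻¹' u) := hf hu
      have hind : Integrable ((f ⁻¹' u).indicator (μ⟦g ⁻¹' t|m'⟧)) μ :=
        integrable_condExp.indicator hu0
      have hptws : (f ⁻¹' u).indicator (μ⟦g ⁻¹' t|m'⟧)
          = (μ⟦g ⁻¹' t|m'⟧) * (f ⁻¹' u).indicator (fun _ => (1:ℝ)) := by
        funext x
        by_cases hx : x ∈ f ⁻¹' u <;> simp [Set.indicator_apply, hx]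
      have hIu : Integrable ((f ⁻¹' u).indicator fun _ => (1:ℝ)) μ :=
        (integrable_const 1).indicator hu0
      have hmul : μ[(μ⟦g ⁻¹' t|m'⟧) * (f ⁻¹' u).indicator (fun _ => (1:ℝ)) | m'] =ᵐ[μ]
          (μ⟦g ⁻¹' t|m'⟧) * μ⟦f ⁻¹' u|m'⟧ :=
        condExp_mul_of_stronglyMeasurable_left stronglyMeasurable_condExp (hptws ▸ hind) hIu
      have hcomm : (μ⟦g ⁻¹' t|m'⟧) * μ⟦f ⁻¹' u|m'⟧ =ᵐ[μ] μ⟦f ⁻¹' u ∩ g ⁻¹' t|m'⟧ := by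
        refine Filter.EventuallyEq.trans ?_ (hprod u t hu ht).symm
        exact Filter.Eventually.of_forall fun x => mul_comm _ _
      have e1 : μ[(f ⁻¹' u).indicator (μ⟦g ⁻¹' t|m'⟧)|m'] =ᵐ[μ] μ⟦f ⁻¹' u ∩ g ⁻¹' t|m'⟧ := by
        rw [hptws]; exact hmul.trans hcomm
      calc ∫ x in s ∩ f ⁻¹' u, (μ⟦g ⁻¹' t|m'⟧) x ∂μ
          = ∫ x in s, (f ⁻¹' u).indicator (μ⟦g ⁻¹' t|m'⟧) x ∂μ :=
            (setIntegral_indicator hu0).symm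
        _ = ∫ x in s, (μ[(f ⁻¹' u).indicator (μ⟦g ⁻¹' t|m'⟧)|m']) x ∂μ :=
            (setIntegral_condExp hm' hind hs).symm
        _ = ∫ x in s, (μ⟦f ⁻¹' u ∩ g ⁻¹' t|m'⟧) x ∂μ :=
            setIntegral_congr_ae hs0 (e1.mono fun x hx _ => hx)
        _ = ∫ x in s, ((f ⁻¹' u ∩ g ⁻¹' t).indicator fun _ => (1:ℝ)) x ∂μ :=
            setIntegral_condExp hm' ((integrable_const 1).indicator (hu0.inter hB)) hs
        _ = ∫ x in s ∩ f ⁻¹' u, ((g ⁻¹' t).indicator fun _ => (1:ℝ)) x ∂μ := by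
            rw [setIntegral_indicator (hu0.inter hB), setIntegral_indicator hB, Set.inter_assoc]
    · -- complements
      intro A hA hCA
      have hA0 : MeasurableSet A := hm'' A hA
      have t1 := integral_add_compl hA0 (integrable_condExp :
        Integrable (μ⟦g ⁻¹' t|m'⟧) μ)
      have t2 := integral_add_compl hA0 hint
      have t3 : ∫ x, (μ⟦g ⁻¹' t|m'⟧) x ∂μ
          = ∫ x, ((g ⁻¹' t).indicator fun _ => (1:ℝ)) x ∂μ := integral_condExp hm'
      linarith
    · -- countable disjoint unions
      intro F hdisj hFm hCF
      rw [integral_iUnion (fun k => hm'' _ (hFm k)) hdisj integrable_condExp.integrableOn,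
        integral_iUnion (fun k => hm'' _ (hFm k)) hdisj hint.integrableOn]
      exact tsum_congr hCF
  · intro h
    rw [condIndepFun_iff_condExp_inter_preimage_eq_mul hf hg]
    intro s t hs ht
    have hA : MeasurableSet (f ⁻¹' s) := hf hs
    have hB : MeasurableSet (g ⁻¹' t) := hg ht
    have hAm'' : MeasurableSet[m' ⊔ MeasurableSpace.comap f mβ] (f ⁻¹' s) :=
      (le_sup_right : MeasurableSpace.comap f mβ ≤ m' ⊔ MeasurableSpace.comap f mβ)
        _ ⟨s, hs, rfl⟩
    have hSM : StronglyMeasurable[m' ⊔ MeasurableSpace.comap f mβ]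
        ((f ⁻¹' s).indicator fun _ => (1:ℝ)) :=
      (stronglyMeasurable_const :
        StronglyMeasurable[m' ⊔ MeasurableSpace.comap f mβ] fun _ : Ω => (1:ℝ)).indicator hAm''
    have hprodind : (f ⁻¹' s ∩ g ⁻¹' t).indicator (fun _ => (1:ℝ))
        = ((f ⁻¹' s).indicator fun _ => (1:ℝ)) * ((g ⁻¹' t).indicator fun _ => (1:ℝ)) := by
      funext x
      by_cases h1 : x ∈ f ⁻¹' s <;> by_cases h2 : x ∈ g ⁻¹' t <;>
        simp [Set.indicator_apply, h1, h2]
    have hintA : Integrable ((f ⁻¹' s).indicator fun _ => (1:ℝ)) μ :=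
      (integrable_const 1).indicator hA
    have hintB : Integrable ((g ⁻¹' t).indicator fun _ => (1:ℝ)) μ :=
      (integrable_const 1).indicator hB
    have hintAB : Integrable (((f ⁻¹' s).indicator fun _ => (1:ℝ))
        * ((g ⁻¹' t).indicator fun _ => (1:ℝ))) μ := by
      rw [← hprodind]; exact (integrable_const 1).indicator (hA.inter hB)
    have hintmix : Integrable ((μ⟦g ⁻¹' t|m'⟧) * ((f ⁻¹' s).indicator fun _ => (1:ℝ))) μ := by
      refine ((integrable_condExp (m := m') (f := (g ⁻¹' t).indicator fun _ => (1:ℝ))).indicator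
        hA).congr (Filter.Eventually.of_forall fun x => ?_)
      by_cases hx : x ∈ f ⁻¹' s <;> simp [Set.indicator_apply, hx]
    calc μ⟦f ⁻¹' s ∩ g ⁻¹' t|m'⟧
        = μ[((f ⁻¹' s).indicator fun _ => (1:ℝ))
            * ((g ⁻¹' t).indicator fun _ => (1:ℝ))|m'] := by rw [hprodind]
      _ =ᵐ[μ] μ[μ[((f ⁻¹' s).indicator fun _ => (1:ℝ))
            * ((g ⁻¹' t).indicator fun _ => (1:ℝ))|m' ⊔ MeasurableSpace.comap f mβ]|m'] :=
          (condExp_condExp_of_le le_sup_left hm'').symm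
      _ =ᵐ[μ] μ[((f ⁻¹' s).indicator fun _ => (1:ℝ))
            * (μ⟦g ⁻¹' t|m' ⊔ MeasurableSpace.comap f mβ⟧)|m'] :=
          condExp_congr_ae (condExp_mul_of_stronglyMeasurable_left hSM hintAB hintB)
      _ =ᵐ[μ] μ[((f ⁻¹' s).indicator fun _ => (1:ℝ)) * (μ⟦g ⁻¹' t|m'⟧)|m'] := by
          refine condExp_congr_ae ?_
          filter_upwards [h t ht] with x hx
          simp only [Pi.mul_apply, hx]
      _ =ᵐ[μ] μ[(μ⟦g ⁻¹' t|m'⟧) * ((f ⁻¹' s).indicator fun _ => (1:ℝ))|m'] :=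
          condExp_congr_ae (Filter.Eventually.of_forall fun x => mul_comm _ _)
      _ =ᵐ[μ] (μ⟦g ⁻¹' t|m'⟧) * μ⟦f ⁻¹' s|m'⟧ :=
          condExp_mul_of_stronglyMeasurable_left stronglyMeasurable_condExp hintmix hintA
      _ =ᵐ[μ] fun ω => (μ⟦f ⁻¹' s|m'⟧) ω * (μ⟦g ⁻¹' t|m'⟧) ω :=
          Filter.Eventually.of_forall fun x => mul_comm _ _

/-- **Equivalence of nonanticipativity conditions MC3 and MC4** (Lemma 2, part of):
for processes `X_0, …, X_n` and `Y_0, …, Y_n` on a probability space, the family of conditions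
"for every `i < n`, `(Y_0, …, Y_i)` is conditionally independent of `X_{i+1}` given
`(X_0, …, X_i)`" holds iff the family
"for every `i < n`, `(X_{i+1}, …, X_n)` is conditionally independent of `(Y_0, …, Y_i)` given
`(X_0, …, X_i)`" holds. -/
theorem mc3_iff_mc4
    {Ω : Type*} [MeasurableSpace Ω] [StandardBorelSpace Ω] [Nonempty Ω]
    (P : Measure Ω) [IsProbabilityMeasure P]
    (n : ℕ)
    (𝒳 𝒴 : ℕ → Type*)
    [∀ i, MeasurableSpace (𝒳 i)] [∀ i, StandardBorelSpace (𝒳 i)]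
    [∀ i, MeasurableSpace (𝒴 i)] [∀ i, StandardBorelSpace (𝒴 i)]
    (X : ∀ i, Ω → 𝒳 i) (Y : ∀ i, Ω → 𝒴 i)
    (hX : ∀ i, Measurable (X i)) (hY : ∀ i, Measurable (Y i)) :
    -- MC3 : for every `i < n`, `(Y_0, …, Y_i) ⫫ X_{i+1} | (X_0, …, X_i)`
    (∀ i < n,
      CondIndepFun
        (MeasurableSpace.comap (fun ω => fun j : Fin (i + 1) => X j ω) inferInstance)
        ((measurable_pi_lambda _ fun j : Fin (i + 1) => hX j).comap_le)
        (fun ω => fun j : Fin (i + 1) => Y j ω) (X (i + 1)) P)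
    ↔
    -- MC4 : for every `i < n`, `(X_{i+1}, …, X_n) ⫫ (Y_0, …, Y_i) | (X_0, …, X_i)`
    (∀ i < n,
      CondIndepFun
        (MeasurableSpace.comap (fun ω => fun j : Fin (i + 1) => X j ω) inferInstance)
        ((measurable_pi_lambda _ fun j : Fin (i + 1) => hX j).comap_le)
        (fun ω => fun j : Fin (n - i) => X (i + 1 + j) ω)
        (fun ω => fun j : Fin (i + 1) => Y j ω) P) := by
  have hXT : ∀ k : ℕ, Measurable (fun ω => fun j : Fin (k+1) => X j ω) :=
    fun k => measurable_pi_lambda _ fun j => hX j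
  have hYT : ∀ k : ℕ, Measurable (fun ω => fun j : Fin (k+1) => Y j ω) :=
    fun k => measurable_pi_lambda _ fun j => hY j
  have hW : ∀ i : ℕ, Measurable (fun ω => fun j : Fin (n-i) => X (i+1+j) ω) :=
    fun i => measurable_pi_lambda _ fun j => hX _
  -- the filtration σ-algebras
  let M : ℕ → MeasurableSpace Ω := fun k =>
    MeasurableSpace.comap (fun ω => fun j : Fin (k+1) => X j ω) inferInstance
  have hMle : ∀ k, M k ≤ ‹MeasurableSpace Ω› := fun k => (hXT k).comap_le
  have measXle : ∀ (k a : ℕ) (ha : a < k+1), Measurable[M k] (X a) := by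
    intro k a ha
    have h1 : Measurable[M k] (fun ω => fun j : Fin (k+1) => X j ω) :=
      measurable_iff_comap_le.mpr le_rfl
    exact (measurable_pi_apply (⟨a, ha⟩ : Fin (k+1))).comp h1
  have comapXT_le : ∀ (k : ℕ) (M' : MeasurableSpace Ω),
      (∀ a, a < k+1 → Measurable[M'] (X a)) → M k ≤ M' := by
    intro k M' h
    exact Measurable.comap_le (measurable_pi_lambda _ fun j => h j j.isLt)
  have measX_congr : ∀ {M' : MeasurableSpace Ω} {a b : ℕ}, a = b →
      Measurable[M'] (X a) → Measurable[M'] (X b) := by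
    intro M' a b h hm; subst h; exact hm
  have hF2 : ∀ k : ℕ, M k ⊔ MeasurableSpace.comap (X (k+1)) inferInstance = M (k+1) := by
    intro k
    refine le_antisymm (sup_le ?_ ?_) ?_
    · exact comapXT_le k (M (k+1)) fun a ha => measXle (k+1) a (by omega)
    · exact Measurable.comap_le (measXle (k+1) (k+1) (by omega))
    · refine comapXT_le (k+1) _ fun a ha => ?_
      by_cases ha' : a < k+1
      · exact (measXle k a ha').mono le_sup_left le_rfl
      · refine measX_congr (show k+1 = a by omega) ?_
        exact (measurable_iff_comap_le.mpr le_rfl).mono le_sup_right le_rfl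
  have hF3 : ∀ i : ℕ, i < n →
      M i ⊔ MeasurableSpace.comap (fun ω => fun j : Fin (n-i) => X (i+1+j) ω) inferInstance
        = M n := by
    intro i hi
    refine le_antisymm (sup_le ?_ ?_) ?_
    · exact comapXT_le i (M n) fun a ha => measXle n a (by omega)
    · have hres : Measurable (fun v : (∀ j : Fin (n+1), 𝒳 j) =>
          fun j : Fin (n-i) => v ⟨i+1+j, by have := j.isLt; omega⟩) :=
        measurable_pi_lambda _ fun j => measurable_pi_apply _
      have : MeasurableSpace.comap ((fun v : (∀ j : Fin (n+1), 𝒳 j) =>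
            fun j : Fin (n-i) => v ⟨i+1+j, by have := j.isLt; omega⟩)
            ∘ (fun ω => fun j : Fin (n+1) => X j ω)) inferInstance
          ≤ MeasurableSpace.comap (fun ω => fun j : Fin (n+1) => X j ω) inferInstance := by
        rw [← MeasurableSpace.comap_comp]
        exact MeasurableSpace.comap_mono hres.comap_le
      exact this
    · refine comapXT_le n _ fun a ha => ?_
      by_cases ha' : a < i+1
      · exact (measXle i a ha').mono le_sup_left le_rfl
      · have hk : a - (i+1) < n - i := by omega
        have h1 : Measurable[MeasurableSpace.comap
            (fun ω => fun j : Fin (n-i) => X (i+1+j) ω) inferInstance]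
            (fun ω => fun j : Fin (n-i) => X (i+1+j) ω) :=
          measurable_iff_comap_le.mpr le_rfl
        have hmW : Measurable[MeasurableSpace.comap
            (fun ω => fun j : Fin (n-i) => X (i+1+j) ω) inferInstance]
            (X (i+1+(a-(i+1)))) :=
          (measurable_pi_apply (⟨a-(i+1), hk⟩ : Fin (n-i))).comp h1
        exact measX_congr (show i+1+(a-(i+1)) = a by omega) (hmW.mono le_sup_right le_rfl)
  constructor
  · -- MC3 → MC4
    intro h3 i hi
    have h3doob : ∀ k, k < n → ∀ t : Set (∀ j : Fin (k+1), 𝒴 j), MeasurableSet t →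
        (P⟦(fun ω => fun j : Fin (k+1) => Y j ω) ⁻¹' t | M (k+1)⟧) =ᵐ[P]
          P⟦(fun ω => fun j : Fin (k+1) => Y j ω) ⁻¹' t | M k⟧ := by
      intro k hk t ht
      have := (condIndepFun_iff_condexp_doob (hMle k) (hX (k+1)) (hYT k)).mp
        (Kernel.IndepFun.symm (h3 k hk)) t ht
      rwa [hF2 k] at this
    refine (condIndepFun_iff_condexp_doob (hMle i) (hW i) (hYT i)).mpr fun t ht => ?_
    rw [hF3 i hi]
    have key : ∀ k, i ≤ k → k ≤ n →
        (P⟦(fun ω => fun j : Fin (i+1) => Y j ω) ⁻¹' t | M k⟧) =ᵐ[P]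
          P⟦(fun ω => fun j : Fin (i+1) => Y j ω) ⁻¹' t | M i⟧ := by
      intro k hik
      induction k, hik using Nat.le_induction with
      | base => exact fun _ => Filter.EventuallyEq.rfl
      | succ k hik ih =>
        intro hk1n
        have hk : k < n := by omega
        have hπ : Measurable (fun v : (∀ j : Fin (k+1), 𝒴 j) =>
            fun j : Fin (i+1) => v ⟨j.val, by have := j.isLt; omega⟩) :=
          measurable_pi_lambda _ fun j => measurable_pi_apply _
        have hBrw : (fun ω => fun j : Fin (i+1) => Y j ω) ⁻¹' t
            = (fun ω => fun j : Fin (k+1) => Y j ω) ⁻¹'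
              ((fun v : (∀ j : Fin (k+1), 𝒴 j) =>
                fun j : Fin (i+1) => v ⟨j.val, by have := j.isLt; omega⟩) ⁻¹' t) := rfl
        refine Filter.EventuallyEq.trans ?_ (ih (by omega))
        rw [hBrw]
        exact h3doob k hk _ (hπ ht)
    exact key n (le_of_lt hi) le_rfl
  · -- MC4 → MC3
    intro h4 i hi
    have h0 : (0:ℕ) < n - i := by omega
    have h1 : Measurable (fun v : (∀ j : Fin (n-i), 𝒳 (i+1+j)) => v ⟨0, h0⟩) :=
      measurable_pi_apply _
    exact Kernel.IndepFun.symm ((h4 i hi).comp h1 measurable_id)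
end

section
/- Convexity of the set of nonanticipative joint distributions (Theorem 1, in conditional-independence form): let μ₁ and μ₂ be probability measures on (∏_{i=0}^n 𝒳_i) × (∏_{i=0}^n 𝒴_i) whose marginals on ∏_{i=0}^n 𝒳_i coincide. Suppose that under each μ_k (k = 1,2), for every i = 0,1,…,n−1, the coordinate tuple (X_{i+1},…,X_n) is conditionally independent of (Y_0,…,Y_i) given (X_0,…,X_i). Then for every λ ∈ [0,1] the mixture λμ₁ + (1−λ)μ₂ also satisfies: for every i = 0,1,…,n−1, (X_{i+1},…,X_n) is conditionally independent of (Y_0,…,Y_i) given (X_0,…,X_i). -/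
open MeasureTheory ProbabilityTheory
open scoped NNReal ENNReal


/-- NNReal smul of a measure coincides with ENNReal smul of the coercion. -/
lemma nnreal_smul_measure_eq {Ω : Type*} [MeasurableSpace Ω] (c : ℝ≥0) (ρ : Measure Ω) :
    c • ρ = (c : ℝ≥0∞) • ρ := by
  ext s hs
  rw [Measure.smul_apply, Measure.smul_apply, ENNReal.smul_def]

/-- Transfer of conditional expectation of an indicator along a measurable map:
the conditional expectation of `1_{p ⁻¹' A}` given `m.comap p` is the pullback of the
conditional expectation of `1_A` given `m` under the pushforward measure. -/
lemma condexp_indicator_comap_map {Ω E : Type*} {m : MeasurableSpace E}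
    [MeasurableSpace Ω] [mE0 : MeasurableSpace E]
    {p : Ω → E} (hp : Measurable p) (ρ : Measure Ω)
    [IsFiniteMeasure ρ] (hm : m ≤ mE0) {A : Set E} (hA : MeasurableSet A) :
    (ρ⟦p ⁻¹' A | m.comap p⟧) =ᵐ[ρ] fun ω => ((ρ.map p)⟦A | m⟧) (p ω) := by
  have hmc : m.comap p ≤ ‹MeasurableSpace Ω› :=
    (MeasurableSpace.comap_mono hm).trans hp.comap_le
  haveI : IsFiniteMeasure (ρ.map p) := Measure.isFiniteMeasure_map ρ p
  have hind : Integrable (A.indicator fun _ => (1 : ℝ)) (ρ.map p) :=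
    (integrable_const (1 : ℝ)).indicator hA
  have hcsm : AEStronglyMeasurable ((ρ.map p)⟦A | m⟧) (ρ.map p) :=
    (stronglyMeasurable_condExp.mono hm).aestronglyMeasurable
  have hpm : @Measurable Ω E (m.comap p) m p := Measurable.of_comap_le le_rfl
  refine (ae_eq_condExp_of_forall_setIntegral_eq hmc
    ((integrable_const (1 : ℝ)).indicator (hp hA)) ?_ ?_ ?_).symm
  · intro C _ _
    exact ((integrable_map_measure hcsm hp.aemeasurable).mp integrable_condExp).integrableOn
  · rintro C ⟨C', hC', rfl⟩ _
    have h1 : ∫ ω in p ⁻¹' C', ((ρ.map p)⟦A | m⟧) (p ω) ∂ρ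
        = ∫ x in C', ((ρ.map p)⟦A | m⟧) x ∂(ρ.map p) :=
      (setIntegral_map (hm _ hC') hcsm hp.aemeasurable).symm
    have h2 : ∫ x in C', ((ρ.map p)⟦A | m⟧) x ∂(ρ.map p)
        = ∫ x in C', A.indicator (fun _ => (1 : ℝ)) x ∂(ρ.map p) :=
      setIntegral_condExp hm hind hC'
    have h3 : ∫ x in C', A.indicator (fun _ => (1 : ℝ)) x ∂(ρ.map p)
        = ∫ ω in p ⁻¹' C', A.indicator (fun _ => (1 : ℝ)) (p ω) ∂ρ :=
      setIntegral_map (hm _ hC') hind.aestronglyMeasurable hp.aemeasurable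
    have h4 : ∀ ω, A.indicator (fun _ => (1 : ℝ)) (p ω)
        = (p ⁻¹' A).indicator (fun _ => (1 : ℝ)) ω := by
      intro ω
      by_cases h : p ω ∈ A
      · simp [Set.indicator_of_mem, h, Set.mem_preimage]
      · simp [Set.indicator_of_notMem, h, Set.mem_preimage]
    rw [h1, h2, h3]
    exact integral_congr_ae (Filter.Eventually.of_forall fun ω => h4 ω)
  · exact StronglyMeasurable.aestronglyMeasurable
      (stronglyMeasurable_condExp.comp_measurable hpm)

lemma isProbabilityMeasure_mix {Ω : Type*} [MeasurableSpace Ω] (μ₁ μ₂ : Measure Ω)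
    [IsProbabilityMeasure μ₁] [IsProbabilityMeasure μ₂] {lam : ℝ≥0} (hlam : lam ≤ 1) :
    IsProbabilityMeasure (lam • μ₁ + (1 - lam) • μ₂) := by
  constructor
  rw [Measure.add_apply, nnreal_smul_measure_eq, nnreal_smul_measure_eq,
    Measure.smul_apply, Measure.smul_apply, measure_univ, measure_univ,
    smul_eq_mul, smul_eq_mul, mul_one, mul_one, ← ENNReal.coe_add,
    add_tsub_cancel_of_le hlam, ENNReal.coe_one]

lemma mix_map_eq {Ω E : Type*} [MeasurableSpace Ω] [MeasurableSpace E]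
    (μ₁ μ₂ : Measure Ω) {p : Ω → E} (hp : Measurable p)
    (hmarg : μ₁.map p = μ₂.map p) {lam : ℝ≥0} (hlam : lam ≤ 1) :
    (lam • μ₁ + (1 - lam) • μ₂).map p = μ₁.map p := by
  rw [Measure.map_add _ _ hp, Measure.map_smul, Measure.map_smul, ← hmarg,
    nnreal_smul_measure_eq, nnreal_smul_measure_eq, ← add_smul, ← ENNReal.coe_add,
    add_tsub_cancel_of_le hlam, ENNReal.coe_one, one_smul]

lemma bound_transfer {Ω E : Type*} [MeasurableSpace Ω] [MeasurableSpace E]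
    {p : Ω → E} (hp : Measurable p) (ρ : Measure Ω) (ν : Measure E) (hν : ρ.map p = ν)
    {c : E → ℝ} (hc : Measurable c) (hb : ∀ᵐ x ∂ν, ‖c x‖ ≤ 1) :
    ∀ᵐ ω ∂ρ, ‖c (p ω)‖ ≤ 1 := by
  have hset : MeasurableSet {x : E | ‖c x‖ ≤ 1} := measurableSet_le hc.norm measurable_const
  exact (ae_map_iff hp.aemeasurable hset).mp (by rw [hν]; exact hb)

lemma condexp_indicator_norm_le_one {E : Type*} {m : MeasurableSpace E} [mE : MeasurableSpace E]
    (hm : m ≤ mE) (ν : Measure E) [IsProbabilityMeasure ν] {A : Set E} (hA : MeasurableSet A) :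
    ∀ᵐ x ∂ν, ‖(ν⟦A | m⟧) x‖ ≤ 1 := by
  have h0 : 0 ≤ᵐ[ν] ν⟦A | m⟧ :=
    condExp_nonneg (Filter.Eventually.of_forall fun x =>
      Set.indicator_nonneg (fun _ _ => zero_le_one) x)
  have hle : (A.indicator fun _ => (1 : ℝ)) ≤ᵐ[ν] fun _ => (1 : ℝ) := by
    refine Filter.Eventually.of_forall fun x => ?_
    by_cases h : x ∈ A <;> simp [Set.indicator_of_mem, Set.indicator_of_notMem, h]
  have h1 := condExp_mono (m := m) ((integrable_const (1 : ℝ)).indicator hA)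
    (integrable_const (1 : ℝ)) hle
  rw [condExp_const hm (1 : ℝ)] at h1
  filter_upwards [h0, h1] with x hx0 hx1
  simp only [Pi.zero_apply] at hx0
  rw [Real.norm_eq_abs, abs_le]
  exact ⟨by linarith, by simpa using hx1⟩

/-- The key abstract mixing lemma: if `a` is a common version (for `μ₁`, `μ₂` and the mixture)
of the conditional expectation of `1_A` given `m'`, and the product formula holds for `μ₁` and
`μ₂`, then it holds for the mixture. -/
lemma mix_condexp_indicator {Ω : Type*} {m' : MeasurableSpace Ω} [mΩ : MeasurableSpace Ω]
    (hm' : m' ≤ mΩ)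
    (μ₁ μ₂ : Measure Ω) [IsProbabilityMeasure μ₁] [IsProbabilityMeasure μ₂]
    (lam : ℝ≥0) (hlam : lam ≤ 1)
    {A B : Set Ω} (hA : MeasurableSet A) (hB : MeasurableSet B)
    {a : Ω → ℝ} (ha : StronglyMeasurable[m'] a)
    (hb1 : ∀ᵐ ω ∂μ₁, ‖a ω‖ ≤ 1) (hb2 : ∀ᵐ ω ∂μ₂, ‖a ω‖ ≤ 1)
    (ha1 : (μ₁⟦A | m'⟧) =ᵐ[μ₁] a) (ha2 : (μ₂⟦A | m'⟧) =ᵐ[μ₂] a)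
    (haμ : ((lam • μ₁ + (1 - lam) • μ₂)⟦A | m'⟧) =ᵐ[lam • μ₁ + (1 - lam) • μ₂] a)
    (hci1 : (μ₁⟦A ∩ B | m'⟧) =ᵐ[μ₁] fun ω => (μ₁⟦A | m'⟧) ω * (μ₁⟦B | m'⟧) ω)
    (hci2 : (μ₂⟦A ∩ B | m'⟧) =ᵐ[μ₂] fun ω => (μ₂⟦A | m'⟧) ω * (μ₂⟦B | m'⟧) ω) :
    ((lam • μ₁ + (1 - lam) • μ₂)⟦A ∩ B | m'⟧) =ᵐ[lam • μ₁ + (1 - lam) • μ₂]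
      fun ω => ((lam • μ₁ + (1 - lam) • μ₂)⟦A | m'⟧) ω
        * ((lam • μ₁ + (1 - lam) • μ₂)⟦B | m'⟧) ω := by
  set μ := lam • μ₁ + (1 - lam) • μ₂ with hμ
  haveI : IsProbabilityMeasure μ := isProbabilityMeasure_mix μ₁ μ₂ hlam
  have hbμ : ∀ᵐ ω ∂μ, ‖a ω‖ ≤ 1 := by
    rw [hμ, nnreal_smul_measure_eq, nnreal_smul_measure_eq, ae_add_measure_iff]
    exact ⟨Measure.ae_smul_measure hb1 _, Measure.ae_smul_measure hb2 _⟩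
  have haesm : ∀ (ρ : Measure Ω), AEStronglyMeasurable a ρ :=
    fun ρ => ((ha.mono hm').aestronglyMeasurable)
  have hBint : ∀ (ρ : Measure Ω) [IsFiniteMeasure ρ],
      Integrable (B.indicator fun _ => (1 : ℝ)) ρ :=
    fun ρ _ => (integrable_const (1 : ℝ)).indicator hB
  have hABint : ∀ (ρ : Measure Ω) [IsFiniteMeasure ρ],
      Integrable ((A ∩ B).indicator fun _ => (1 : ℝ)) ρ :=
    fun ρ _ => (integrable_const (1 : ℝ)).indicator (hA.inter hB)
  have hhint : ∀ (ρ : Measure Ω) [IsFiniteMeasure ρ], (∀ᵐ ω ∂ρ, ‖a ω‖ ≤ 1) →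
      Integrable (fun ω => a ω * B.indicator (fun _ => (1 : ℝ)) ω) ρ :=
    fun ρ _ hb => (hBint ρ).bdd_mul (haesm ρ) hb
  have hpull : ∀ (ρ : Measure Ω) [IsProbabilityMeasure ρ], (∀ᵐ ω ∂ρ, ‖a ω‖ ≤ 1) →
      (ρ[fun ω => a ω * B.indicator (fun _ => (1 : ℝ)) ω | m'])
        =ᵐ[ρ] fun ω => a ω * (ρ⟦B | m'⟧) ω := by
    intro ρ _ hb
    exact condExp_stronglyMeasurable_mul_of_bound hm' ha (hBint ρ) 1 hb
  -- per-measure computation of set integrals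
  have hstep : ∀ {C : Set Ω}, MeasurableSet[m'] C → ∀ (ρ : Measure Ω) [IsProbabilityMeasure ρ],
      (∀ᵐ ω ∂ρ, ‖a ω‖ ≤ 1) → ((ρ⟦A | m'⟧) =ᵐ[ρ] a) →
      ((ρ⟦A ∩ B | m'⟧) =ᵐ[ρ] fun ω => (ρ⟦A | m'⟧) ω * (ρ⟦B | m'⟧) ω) →
      ∫ ω in C, a ω * B.indicator (fun _ => (1 : ℝ)) ω ∂ρ
        = ∫ ω in C, (A ∩ B).indicator (fun _ => (1 : ℝ)) ω ∂ρ := by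
    intro C hC ρ _ hb haA hci
    calc ∫ ω in C, a ω * B.indicator (fun _ => (1 : ℝ)) ω ∂ρ
        = ∫ ω in C, (ρ[fun ω => a ω * B.indicator (fun _ => (1 : ℝ)) ω | m']) ω ∂ρ :=
          (setIntegral_condExp hm' (hhint ρ hb) hC).symm
      _ = ∫ ω in C, a ω * (ρ⟦B | m'⟧) ω ∂ρ :=
          integral_congr_ae (ae_restrict_of_ae (hpull ρ hb))
      _ = ∫ ω in C, (ρ⟦A | m'⟧) ω * (ρ⟦B | m'⟧) ω ∂ρ := by
          refine integral_congr_ae (ae_restrict_of_ae ?_)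
          filter_upwards [haA] with ω hω
          rw [hω]
      _ = ∫ ω in C, (ρ⟦A ∩ B | m'⟧) ω ∂ρ :=
          (integral_congr_ae (ae_restrict_of_ae hci)).symm
      _ = ∫ ω in C, (A ∩ B).indicator (fun _ => (1 : ℝ)) ω ∂ρ :=
          setIntegral_condExp hm' (hABint ρ) hC
  -- mixing identity for set integrals
  have hmixI : ∀ {f : Ω → ℝ} (C : Set Ω), Integrable f μ₁ → Integrable f μ₂ →
      ∫ ω in C, f ω ∂μ = (lam : ℝ≥0∞).toReal * ∫ ω in C, f ω ∂μ₁
        + (((1 - lam : ℝ≥0) : ℝ≥0∞)).toReal * ∫ ω in C, f ω ∂μ₂ := by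
    intro f C hf1 hf2
    rw [hμ, Measure.restrict_add, nnreal_smul_measure_eq, nnreal_smul_measure_eq,
      Measure.restrict_smul, Measure.restrict_smul,
      integral_add_measure (hf1.integrableOn.smul_measure ENNReal.coe_ne_top)
        (hf2.integrableOn.smul_measure ENNReal.coe_ne_top),
      integral_smul_measure, integral_smul_measure, smul_eq_mul, smul_eq_mul]
  -- uniqueness of the conditional expectation under the mixture
  have key : (fun ω => a ω * (μ⟦B | m'⟧) ω) =ᵐ[μ] μ⟦A ∩ B | m'⟧ := by
    refine ae_eq_condExp_of_forall_setIntegral_eq hm' (hABint μ) ?_ ?_ ?_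
    · intro C _ _
      exact (integrable_condExp.bdd_mul (haesm μ) hbμ).integrableOn
    · intro C hC _
      calc ∫ ω in C, a ω * (μ⟦B | m'⟧) ω ∂μ
          = ∫ ω in C, (μ[fun ω => a ω * B.indicator (fun _ => (1 : ℝ)) ω | m']) ω ∂μ :=
            (integral_congr_ae (ae_restrict_of_ae (hpull μ hbμ))).symm
        _ = ∫ ω in C, a ω * B.indicator (fun _ => (1 : ℝ)) ω ∂μ :=
            setIntegral_condExp hm' (hhint μ hbμ) hC
        _ = (lam : ℝ≥0∞).toReal * ∫ ω in C, a ω * B.indicator (fun _ => (1 : ℝ)) ω ∂μ₁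
            + (((1 - lam : ℝ≥0) : ℝ≥0∞)).toReal
              * ∫ ω in C, a ω * B.indicator (fun _ => (1 : ℝ)) ω ∂μ₂ :=
            hmixI C (hhint μ₁ hb1) (hhint μ₂ hb2)
        _ = (lam : ℝ≥0∞).toReal * ∫ ω in C, (A ∩ B).indicator (fun _ => (1 : ℝ)) ω ∂μ₁
            + (((1 - lam : ℝ≥0) : ℝ≥0∞)).toReal
              * ∫ ω in C, (A ∩ B).indicator (fun _ => (1 : ℝ)) ω ∂μ₂ := by
            rw [hstep hC μ₁ hb1 ha1 hci1, hstep hC μ₂ hb2 ha2 hci2]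
        _ = ∫ ω in C, (A ∩ B).indicator (fun _ => (1 : ℝ)) ω ∂μ :=
            (hmixI C (hABint μ₁) (hABint μ₂)).symm
    · exact StronglyMeasurable.aestronglyMeasurable (ha.mul stronglyMeasurable_condExp)
  calc (μ⟦A ∩ B | m'⟧) =ᵐ[μ] fun ω => a ω * (μ⟦B | m'⟧) ω := key.symm
    _ =ᵐ[μ] fun ω => (μ⟦A | m'⟧) ω * (μ⟦B | m'⟧) ω := by
        filter_upwards [haμ] with ω hω
        rw [hω]

/-- Abstract form of the nonanticipativity convexity argument: `p` is the projection on the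
`X`-coordinates, `mpast` a sub-σ-algebra of the `X`-space (the past of `X`), `A'` a measurable
set in the `X`-space and `B` a measurable set of the joint space. -/
lemma mix_condIndep_aux {Ω EX : Type*} {mpast : MeasurableSpace EX}
    [mΩ : MeasurableSpace Ω] [mEX : MeasurableSpace EX]
    {p : Ω → EX} (hp : Measurable p) (hpast : mpast ≤ mEX)
    (μ₁ μ₂ : Measure Ω) [IsProbabilityMeasure μ₁] [IsProbabilityMeasure μ₂]
    (hmarg : μ₁.map p = μ₂.map p) {lam : ℝ≥0} (hlam : lam ≤ 1)
    {A' : Set EX} (hA' : MeasurableSet A') {B : Set Ω} (hB : MeasurableSet B)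
    (hci1 : (μ₁⟦p ⁻¹' A' ∩ B | mpast.comap p⟧) =ᵐ[μ₁]
      fun ω => (μ₁⟦p ⁻¹' A' | mpast.comap p⟧) ω * (μ₁⟦B | mpast.comap p⟧) ω)
    (hci2 : (μ₂⟦p ⁻¹' A' ∩ B | mpast.comap p⟧) =ᵐ[μ₂]
      fun ω => (μ₂⟦p ⁻¹' A' | mpast.comap p⟧) ω * (μ₂⟦B | mpast.comap p⟧) ω) :
    ((lam • μ₁ + (1 - lam) • μ₂)⟦p ⁻¹' A' ∩ B | mpast.comap p⟧)
      =ᵐ[lam • μ₁ + (1 - lam) • μ₂]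
      fun ω => ((lam • μ₁ + (1 - lam) • μ₂)⟦p ⁻¹' A' | mpast.comap p⟧) ω
        * ((lam • μ₁ + (1 - lam) • μ₂)⟦B | mpast.comap p⟧) ω := by
  haveI : IsProbabilityMeasure (lam • μ₁ + (1 - lam) • μ₂) :=
    isProbabilityMeasure_mix μ₁ μ₂ hlam
  haveI : IsProbabilityMeasure (μ₁.map p) := Measure.isProbabilityMeasure_map hp.aemeasurable
  have hmapμ : (lam • μ₁ + (1 - lam) • μ₂).map p = μ₁.map p :=
    mix_map_eq μ₁ μ₂ hp hmarg hlam
  have hcm : Measurable ((μ₁.map p)⟦A' | mpast⟧) :=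
    (stronglyMeasurable_condExp.mono hpast).measurable
  have hbν : ∀ᵐ x ∂(μ₁.map p), ‖((μ₁.map p)⟦A' | mpast⟧) x‖ ≤ 1 :=
    condexp_indicator_norm_le_one hpast (μ₁.map p) hA'
  have ha_sm : StronglyMeasurable[mpast.comap p]
      (fun ω => ((μ₁.map p)⟦A' | mpast⟧) (p ω)) :=
    stronglyMeasurable_condExp.comp_measurable (Measurable.of_comap_le le_rfl)
  have htrans : ∀ (ρ : Measure Ω) [IsFiniteMeasure ρ], ρ.map p = μ₁.map p →
      (ρ⟦p ⁻¹' A' | mpast.comap p⟧) =ᵐ[ρ] fun ω => ((μ₁.map p)⟦A' | mpast⟧) (p ω) := by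
    intro ρ _ hρ
    have h := condexp_indicator_comap_map (m := mpast) hp ρ hpast hA'
    rwa [hρ] at h
  have hb : ∀ (ρ : Measure Ω), ρ.map p = μ₁.map p →
      ∀ᵐ ω ∂ρ, ‖((μ₁.map p)⟦A' | mpast⟧) (p ω)‖ ≤ 1 :=
    fun ρ hρ => bound_transfer hp ρ (μ₁.map p) hρ hcm hbν
  exact mix_condexp_indicator ((MeasurableSpace.comap_mono hpast).trans hp.comap_le)
    μ₁ μ₂ lam hlam (hp hA') hB ha_sm (hb μ₁ rfl) (hb μ₂ hmarg.symm)
    (htrans μ₁ rfl) (htrans μ₂ hmarg.symm) (htrans _ hmapμ) hci1 hci2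

/-- **Convexity of the set of nonanticipative joint distributions** (Theorem 1, in
conditional-independence form): if two probability measures `μ₁, μ₂` on
`(∏_{i=0}^n 𝒳_i) × (∏_{i=0}^n 𝒴_i)` have the same marginal on `∏ 𝒳_i` and both satisfy the
nonanticipativity constraint "for every `i < n`, `(X_{i+1}, …, X_n)` is conditionally
independent of `(Y_0, …, Y_i)` given `(X_0, …, X_i)`" (for the coordinate processes), then
every mixture `λ•μ₁ + (1-λ)•μ₂`, `λ ∈ [0,1]`, also satisfies the constraint. -/
theorem convexity_of_nonanticipative_distributions
    {n : ℕ} (𝒳 𝒴 : Fin (n + 1) → Type*)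
    [∀ j, MeasurableSpace (𝒳 j)] [∀ j, StandardBorelSpace (𝒳 j)] [∀ j, Nonempty (𝒳 j)]
    [∀ j, MeasurableSpace (𝒴 j)] [∀ j, StandardBorelSpace (𝒴 j)] [∀ j, Nonempty (𝒴 j)]
    (μ₁ μ₂ : Measure (((j : Fin (n + 1)) → 𝒳 j) × ((j : Fin (n + 1)) → 𝒴 j)))
    [IsProbabilityMeasure μ₁] [IsProbabilityMeasure μ₂]
    (hmarg : μ₁.map Prod.fst = μ₂.map Prod.fst)
    (h₁ : ∀ i : ℕ, ∀ hi : i < n,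
      CondIndepFun
        (MeasurableSpace.comap
          (fun ω : ((j : Fin (n + 1)) → 𝒳 j) × ((j : Fin (n + 1)) → 𝒴 j) =>
            fun j : Fin (i + 1) => ω.1 (Fin.castLE (by omega) j)) inferInstance)
        ((measurable_pi_lambda _ fun j : Fin (i + 1) =>
            (measurable_pi_apply _).comp measurable_fst).comap_le)
        (fun ω => fun j : Fin (n - i) => ω.1 ⟨i + 1 + j.1, by have := j.isLt; omega⟩)
        (fun ω => fun j : Fin (i + 1) => ω.2 (Fin.castLE (by omega) j)) μ₁)
    (h₂ : ∀ i : ℕ, ∀ hi : i < n,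
      CondIndepFun
        (MeasurableSpace.comap
          (fun ω : ((j : Fin (n + 1)) → 𝒳 j) × ((j : Fin (n + 1)) → 𝒴 j) =>
            fun j : Fin (i + 1) => ω.1 (Fin.castLE (by omega) j)) inferInstance)
        ((measurable_pi_lambda _ fun j : Fin (i + 1) =>
            (measurable_pi_apply _).comp measurable_fst).comap_le)
        (fun ω => fun j : Fin (n - i) => ω.1 ⟨i + 1 + j.1, by have := j.isLt; omega⟩)
        (fun ω => fun j : Fin (i + 1) => ω.2 (Fin.castLE (by omega) j)) μ₂)
    (lam : ℝ≥0) (hlam : lam ≤ 1) :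
    ∀ i : ℕ, ∀ hi : i < n,
      CondIndepFun
        (MeasurableSpace.comap
          (fun ω : ((j : Fin (n + 1)) → 𝒳 j) × ((j : Fin (n + 1)) → 𝒴 j) =>
            fun j : Fin (i + 1) => ω.1 (Fin.castLE (by omega) j)) inferInstance)
        ((measurable_pi_lambda _ fun j : Fin (i + 1) =>
            (measurable_pi_apply _).comp measurable_fst).comap_le)
        (fun ω => fun j : Fin (n - i) => ω.1 ⟨i + 1 + j.1, by have := j.isLt; omega⟩)
        (fun ω => fun j : Fin (i + 1) => ω.2 (Fin.castLE (by omega) j))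
        (lam • μ₁ + (1 - lam) • μ₂) := by
  intro i hi
  classical
  haveI : IsProbabilityMeasure (lam • μ₁ + (1 - lam) • μ₂) :=
    isProbabilityMeasure_mix μ₁ μ₂ hlam
  have hij : i + 1 ≤ n + 1 := by omega
  have hF : Measurable (fun ω : ((j : Fin (n + 1)) → 𝒳 j) × ((j : Fin (n + 1)) → 𝒴 j) =>
      fun j : Fin (n - i) => ω.1 ⟨i + 1 + j.1, by have := j.isLt; omega⟩) :=
    measurable_pi_lambda _ fun j => (measurable_pi_apply _).comp measurable_fst
  have hG : Measurable (fun ω : ((j : Fin (n + 1)) → 𝒳 j) × ((j : Fin (n + 1)) → 𝒴 j) =>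
      fun j : Fin (i + 1) => ω.2 (Fin.castLE (by omega : i + 1 ≤ n + 1) j)) :=
    measurable_pi_lambda _ fun j => (measurable_pi_apply _).comp measurable_snd
  have hπi : Measurable (fun x : (j : Fin (n + 1)) → 𝒳 j =>
      fun j : Fin (i + 1) => x (Fin.castLE hij j)) :=
    measurable_pi_lambda _ fun j => measurable_pi_apply _
  have hFx : Measurable (fun x : (j : Fin (n + 1)) → 𝒳 j =>
      fun j : Fin (n - i) => x ⟨i + 1 + j.1, by have := j.isLt; omega⟩) :=
    measurable_pi_lambda _ fun j => measurable_pi_apply _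
  have hm'_eq : MeasurableSpace.comap
      (fun ω : ((j : Fin (n + 1)) → 𝒳 j) × ((j : Fin (n + 1)) → 𝒴 j) =>
        fun j : Fin (i + 1) => ω.1 (Fin.castLE (by omega : i + 1 ≤ n + 1) j)) inferInstance
      = (MeasurableSpace.comap (fun x : (j : Fin (n + 1)) → 𝒳 j =>
          fun j : Fin (i + 1) => x (Fin.castLE hij j)) inferInstance).comap Prod.fst :=
    (MeasurableSpace.comap_comp
      (f := fun x : (j : Fin (n + 1)) → 𝒳 j => fun j : Fin (i + 1) => x (Fin.castLE hij j))
      (g := (Prod.fst : ((j : Fin (n + 1)) → 𝒳 j) × ((j : Fin (n + 1)) → 𝒴 j) →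
        (j : Fin (n + 1)) → 𝒳 j))).symm
  have hci1 := (condIndepFun_iff_condExp_inter_preimage_eq_mul hF hG).mp (h₁ i hi)
  have hci2 := (condIndepFun_iff_condExp_inter_preimage_eq_mul hF hG).mp (h₂ i hi)
  rw [hm'_eq] at hci1 hci2
  rw [condIndepFun_iff_condExp_inter_preimage_eq_mul hF hG]
  intro s t hs ht
  rw [hm'_eq]
  exact mix_condIndep_aux measurable_fst hπi.comap_le μ₁ μ₂ hmarg hlam (hFx hs) (hG ht)
    (hci1 s t hs ht) (hci2 s t hs ht)
end

section
/- Stationary distribution of the joint BSMS(p)–reproduction chain: fix p ∈ (0,1) and D ∈ (0,1/2), and let Π be the transition matrix on {0,1}² given by Π((x',y') | (x,y)) = T_p(x' | x) · Q*(y' | y, x'), with T_p and Q* as defined in the context. Then the probability vector π̄ on {0,1}² defined by π̄(x,y) = (1−D)/2 if x = y and π̄(x,y) = D/2 if x ≠ y is invariant for Π, i.e., for every (x',y') ∈ {0,1}², Σ_{(x,y) ∈ {0,1}²} Π((x',y') | (x,y)) · π̄(x,y) = π̄(x',y'). Consequently, for the Markov chain ((X_i,Y_i)) with transition matrix Π and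 initial distribution π̄, one has ℙ(X_i ≠ Y_i) = D for every i, so the average per-letter Hamming distortion equals D. -/
open MeasureTheory
open scoped ENNReal

/-- The BSMS(`p`) transition kernel on `{0,1}`: `T_p(x' | x) = 1 - p` if `x' = x`, `p`
otherwise. -/
noncomputable def bsmsKernel (p : ℝ) (x' x : Bool) : ℝ := if x' = x then 1 - p else p

/-- `α = (1-p)(1-D)/m` with `m = 1 - p - D + 2pD`. -/
noncomputable def bsmsAlpha (p D : ℝ) : ℝ := (1 - p) * (1 - D) / (1 - p - D + 2 * p * D)

/-- `β = p(1-D)/(1-m)` with `1 - m = p + D - 2pD`. -/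
noncomputable def bsmsBeta (p D : ℝ) : ℝ := p * (1 - D) / (p + D - 2 * p * D)

/-- The optimal reproduction kernel `Q*(y | y', x)` of the nonanticipative RDF of the
BSMS(`p`) with Hamming distortion. -/
noncomputable def bsmsQstar (p D : ℝ) (y' x y : Bool) : ℝ :=
  if y = x then (if y = y' then bsmsAlpha p D else bsmsBeta p D)
  else (if y = y' then 1 - bsmsBeta p D else 1 - bsmsAlpha p D)

/-- The transition matrix `Π((x',y') | (x,y)) = T_p(x' | x) · Q*(y' | y, x')` of the joint
source–reproduction pair process. -/
noncomputable def bsmsJointKernel (p D : ℝ) (z' z : Bool × Bool) : ℝ :=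
  bsmsKernel p z'.1 z.1 * bsmsQstar p D z.2 z'.1 z'.2

/-- The probability vector `π̄` on `{0,1}²`: `π̄(x,y) = (1-D)/2` if `x = y` and `D/2`
otherwise. -/
noncomputable def bsmsPiBar (D : ℝ) (z : Bool × Bool) : ℝ :=
  if z.1 = z.2 then (1 - D) / 2 else D / 2

/-- **Stationary distribution of the joint BSMS(p)–reproduction chain**: the vector `π̄` is
invariant for the transition matrix `Π((x',y')|(x,y)) = T_p(x'|x) · Q*(y'|y,x')`, and for the
Markov chain `Z_i = (X_i, Y_i)` with transition matrix `Π` and initial distribution `π̄` one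
has `ℙ(X_i ≠ Y_i) = D` for every `i`, so the average per-letter Hamming distortion equals
`D`. -/
theorem bsms_joint_chain_stationary_distribution
    {Ω : Type*} [MeasurableSpace Ω] (P : Measure Ω) [IsProbabilityMeasure P]
    (p D : ℝ) (hp : p ∈ Set.Ioo (0 : ℝ) 1) (hD : D ∈ Set.Ioo (0 : ℝ) (1 / 2))
    (n : ℕ) (Z : ℕ → Ω → Bool × Bool)
    (hZm : ∀ i, Measurable (Z i))
    -- initial distribution `π̄`
    (hinit : ∀ z : Bool × Bool, P {ω | Z 0 ω = z} = ENNReal.ofReal (bsmsPiBar D z))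
    -- Markov property with transition matrix `Π`
    (hmarkov : ∀ i : ℕ, ∀ h1 : 1 ≤ i, i ≤ n → ∀ z : Bool × Bool,
      ∀ zs : Fin i → Bool × Bool,
      P {ω | ∀ j : Fin i, Z j ω = zs j} ≠ 0 →
      P ({ω | ∀ j : Fin i, Z j ω = zs j} ∩ {ω | Z i ω = z})
        = ENNReal.ofReal (bsmsJointKernel p D z (zs ⟨i - 1, by omega⟩))
            * P {ω | ∀ j : Fin i, Z j ω = zs j}) :
    -- `π̄` is invariant for `Π`
    (∀ z' : Bool × Bool,
      ∑ z : Bool × Bool, bsmsJointKernel p D z' z * bsmsPiBar D z = bsmsPiBar D z')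
    ∧
    -- the per-letter Hamming distortion is `D` at every time
    (∀ i : ℕ, i ≤ n → P {ω | (Z i ω).1 ≠ (Z i ω).2} = ENNReal.ofReal D) := by

  obtain ⟨hp0, hp1⟩ := hp
  obtain ⟨hD0, hD2⟩ := hD
  have hm : (0:ℝ) < 1 - p - D + 2 * p * D := by nlinarith
  have hm' : (0:ℝ) < p + D - 2 * p * D := by nlinarith
  have ha0 : 0 ≤ bsmsAlpha p D := div_nonneg (by nlinarith) hm.le
  have ha1 : bsmsAlpha p D ≤ 1 := by rw [bsmsAlpha, div_le_one hm]; nlinarith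
  have hb0 : 0 ≤ bsmsBeta p D := div_nonneg (by nlinarith) hm'.le
  have hb1 : bsmsBeta p D ≤ 1 := by rw [bsmsBeta, div_le_one hm']; nlinarith
  have hQ : ∀ y' x y, 0 ≤ bsmsQstar p D y' x y := by
    intro y' x y; unfold bsmsQstar; split_ifs <;> linarith
  have hK : ∀ z' z, 0 ≤ bsmsJointKernel p D z' z := by
    intro z' z
    apply mul_nonneg _ (hQ _ _ _)
    unfold bsmsKernel; split_ifs <;> linarith
  have hPi : ∀ z, 0 ≤ bsmsPiBar D z := by
    intro z; unfold bsmsPiBar; split_ifs <;> linarith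
  have hinv : ∀ z' : Bool × Bool,
      ∑ z : Bool × Bool, bsmsJointKernel p D z' z * bsmsPiBar D z = bsmsPiBar D z' := by
    intro z'
    obtain ⟨x', y'⟩ := z'
    rw [Fintype.sum_prod_type]
    simp only [Fintype.sum_bool, bsmsJointKernel, bsmsKernel, bsmsQstar, bsmsPiBar,
      bsmsAlpha, bsmsBeta]
    cases x' <;> cases y' <;> · simp only [if_true, if_false, reduceIte, Bool.false_eq_true, Bool.true_eq_false]
                                set a := 1 - p - D + 2 * p * D with ha
                                set b := p + D - 2 * p * D with hb
                                have : a ≠ 0 := hm.ne'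
                                have : b ≠ 0 := hm'.ne'
                                field_simp
                                rw [ha, hb]
                                ring
  refine ⟨hinv, ?_⟩
  have hmeasZ : ∀ (i : ℕ) (z : Bool × Bool), MeasurableSet {ω | Z i ω = z} := by
    intro i z
    exact hZm i (measurableSet_singleton z)
  have hpathmeas : ∀ (i : ℕ) (zs : Fin i → Bool × Bool),
      MeasurableSet {ω | ∀ j : Fin i, Z j ω = zs j} := by
    intro i zs
    have h : {ω | ∀ j : Fin i, Z (j : ℕ) ω = zs j} = ⋂ j : Fin i, {ω | Z (j : ℕ) ω = zs j} := by
      ext ω; simp [Set.mem_iInter]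
    rw [h]
    exact MeasurableSet.iInter fun j => hmeasZ j (zs j)
  have hpart : ∀ (i : ℕ) (S : Set Ω), MeasurableSet S →
      P S = ∑ zs : Fin i → Bool × Bool, P ({ω | ∀ j : Fin i, Z j ω = zs j} ∩ S) := by
    intro i S hS
    have hcover : S = ⋃ zs : Fin i → Bool × Bool, ({ω | ∀ j : Fin i, Z (j : ℕ) ω = zs j} ∩ S) := by
      ext ω
      simp only [Set.mem_iUnion, Set.mem_inter_iff, Set.mem_setOf_eq]
      constructor
      · intro h
        exact ⟨fun j => Z j ω, fun j => rfl, h⟩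
      · rintro ⟨zs, _, h⟩
        exact h
    have hdisj : Pairwise (Function.onFun Disjoint fun zs : Fin i → Bool × Bool =>
        {ω | ∀ j : Fin i, Z (j : ℕ) ω = zs j} ∩ S) := by
      intro a b hab
      rw [Function.onFun]
      apply Set.disjoint_left.mpr
      rintro ω ⟨ha, _⟩ ⟨hb, _⟩
      exact hab (funext fun j => (ha j).symm.trans (hb j))
    calc P S = P (⋃ zs : Fin i → Bool × Bool, ({ω | ∀ j : Fin i, Z (j : ℕ) ω = zs j} ∩ S)) := by
          rw [← hcover]
      _ = ∑ zs : Fin i → Bool × Bool, P ({ω | ∀ j : Fin i, Z (j : ℕ) ω = zs j} ∩ S) := by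
          rw [measure_iUnion hdisj fun zs => (hpathmeas i zs).inter hS, tsum_fintype]
  have hmarkov' : ∀ i : ℕ, i + 1 ≤ n → ∀ z : Bool × Bool, ∀ zs : Fin (i+1) → Bool × Bool,
      P ({ω | ∀ j : Fin (i+1), Z j ω = zs j} ∩ {ω | Z (i+1) ω = z})
        = ENNReal.ofReal (bsmsJointKernel p D z (zs ⟨i, by omega⟩)) *
            P {ω | ∀ j : Fin (i+1), Z j ω = zs j} := by
    intro i hi z zs
    by_cases h0 : P {ω | ∀ j : Fin (i+1), Z (j : ℕ) ω = zs j} = 0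
    · rw [h0, mul_zero]
      exact le_antisymm (le_trans (measure_mono Set.inter_subset_left) h0.le) (by positivity)
    · exact hmarkov (i+1) (by omega) hi z zs h0
  have hrec : ∀ i : ℕ, i + 1 ≤ n → ∀ z : Bool × Bool,
      P {ω | Z (i+1) ω = z}
        = ∑ w : Bool × Bool, ENNReal.ofReal (bsmsJointKernel p D z w) * P {ω | Z i ω = w} := by
    intro i hi z
    have key : ∀ w : Bool × Bool, ∀ zs : Fin (i+1) → Bool × Bool,
        {ω | ∀ j : Fin (i+1), Z (j : ℕ) ω = zs j} ∩ {ω | Z i ω = w}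
          = if zs ⟨i, by omega⟩ = w then {ω | ∀ j : Fin (i+1), Z (j : ℕ) ω = zs j} else ∅ := by
      intro w zs
      split_ifs with h
      · apply Set.inter_eq_self_of_subset_left
        intro ω hω
        have h2 := hω ⟨i, by omega⟩
        show Z i ω = w
        rw [← h]
        exact h2
      · ext ω
        simp only [Set.mem_inter_iff, Set.mem_setOf_eq, Set.mem_empty_iff_false, iff_false,
          not_and]
        intro hω hw
        exact h ((hω ⟨i, by omega⟩).symm.trans hw)
    calc P {ω | Z (i+1) ω = z}
        = ∑ zs : Fin (i+1) → Bool × Bool,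
            P ({ω | ∀ j : Fin (i+1), Z (j : ℕ) ω = zs j} ∩ {ω | Z (i+1) ω = z}) :=
          hpart (i+1) _ (hmeasZ (i+1) z)
      _ = ∑ zs : Fin (i+1) → Bool × Bool,
            ENNReal.ofReal (bsmsJointKernel p D z (zs ⟨i, by omega⟩)) *
              P {ω | ∀ j : Fin (i+1), Z (j : ℕ) ω = zs j} :=
          Finset.sum_congr rfl fun zs _ => hmarkov' i hi z zs
      _ = ∑ w : Bool × Bool, ENNReal.ofReal (bsmsJointKernel p D z w) * P {ω | Z i ω = w} := by
          have hw : ∀ w : Bool × Bool, P {ω | Z i ω = w}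
              = ∑ zs : Fin (i+1) → Bool × Bool,
                  (if zs ⟨i, by omega⟩ = w then
                    P {ω | ∀ j : Fin (i+1), Z (j : ℕ) ω = zs j} else 0) := by
            intro w
            rw [hpart (i+1) _ (hmeasZ i w)]
            refine Finset.sum_congr rfl fun zs _ => ?_
            rw [key w zs]
            split_ifs <;> simp
          simp_rw [hw, Finset.mul_sum, mul_ite, mul_zero]
          rw [Finset.sum_comm]
          refine Finset.sum_congr rfl fun zs _ => ?_
          rw [Finset.sum_ite_eq Finset.univ (zs ⟨i, by omega⟩)
            (fun w => ENNReal.ofReal (bsmsJointKernel p D z w) *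
              P {ω | ∀ j : Fin (i+1), Z (j : ℕ) ω = zs j})]
          simp
  have hdist : ∀ i : ℕ, i ≤ n → ∀ z : Bool × Bool,
      P {ω | Z i ω = z} = ENNReal.ofReal (bsmsPiBar D z) := by
    intro i
    induction i with
    | zero => exact fun _ z => hinit z
    | succ i ih =>
      intro hi z
      rw [hrec i hi z]
      have h1 : ∀ w, P {ω | Z i ω = w} = ENNReal.ofReal (bsmsPiBar D w) := ih (by omega)
      calc ∑ w : Bool × Bool, ENNReal.ofReal (bsmsJointKernel p D z w) * P {ω | Z i ω = w}
          = ∑ w : Bool × Bool, ENNReal.ofReal (bsmsJointKernel p D z w * bsmsPiBar D w) := by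
            refine Finset.sum_congr rfl fun w _ => ?_
            rw [h1 w, ← ENNReal.ofReal_mul (hK z w)]
        _ = ENNReal.ofReal (∑ w : Bool × Bool, bsmsJointKernel p D z w * bsmsPiBar D w) :=
            (ENNReal.ofReal_sum_of_nonneg fun w _ => mul_nonneg (hK z w) (hPi w)).symm
        _ = ENNReal.ofReal (bsmsPiBar D z) := by rw [hinv z]
  intro i hi
  have hset : {ω | (Z i ω).1 ≠ (Z i ω).2}
      = {ω | Z i ω = (false, true)} ∪ {ω | Z i ω = (true, false)} := by
    ext ω
    simp only [Set.mem_setOf_eq, Set.mem_union, Prod.ext_iff, ne_eq]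
    cases h1 : (Z i ω).1 <;> cases h2 : (Z i ω).2 <;> simp [h1, h2]
  have hdj : Disjoint {ω | Z i ω = (false, true)} {ω | Z i ω = (true, false)} := by
    apply Set.disjoint_left.mpr
    intro ω h1 h2
    simp only [Set.mem_setOf_eq] at h1 h2
    rw [h1] at h2
    exact absurd h2 (by simp)
  rw [hset, measure_union hdj (hmeasZ i (true, false)), hdist i hi, hdist i hi]
  rw [← ENNReal.ofReal_add (hPi _) (hPi _)]
  congr 1
  simp [bsmsPiBar]
end

section
/- Value of the nonanticipative RDF of the BSMS(p) (evaluated form of Theorem 9): fix p ∈ (0,1) and D ∈ (0,1/2), and let T_p, Q*, π̄, m be as defined in the context. Define the weights w(y', x, y) := Σ_{x' ∈ {0,1}} π̄(x', y') · T_p(x | x') · Q*(y | y', x) for (y', x, y) ∈ {0,1}³. Then Σ_{y' ∈ {0,1}} Σ_{x ∈ {0,1}} Σ_{y ∈ {0,1}} w(y', x, y) · ln( Q*(y | y', x) / T_p(y | y') ) = H(m) − H(D), where H(q) = −q·ln q − (1−q)·ln(1−q) is the binary entropy function with natural logarithm. -/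
set_option maxHeartbeats 1000000


open MeasureTheory

/-- The binary entropy function with natural logarithm:
`H(q) = −q·ln q − (1−q)·ln(1−q)`. -/
noncomputable def binaryEntropy (q : ℝ) : ℝ :=
  -(q * Real.log q) - (1 - q) * Real.log (1 - q)

/-- **Value of the nonanticipative RDF of the BSMS(p)** (evaluated form of Theorem 9): with
the stationary weights `w(y', x, y) = Σ_{x'} π̄(x', y') T_p(x | x') Q*(y | y', x)`, the
per-letter directed information rate
`Σ_{y', x, y} w(y', x, y) · ln( Q*(y | y', x) / T_p(y | y') )` equals
`H(m) − H(D)` with `m = 1 − p − D + 2pD`. -/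
theorem bsms_nonanticipativeRDF_value
    (p D : ℝ) (hp : p ∈ Set.Ioo (0 : ℝ) 1) (hD : D ∈ Set.Ioo (0 : ℝ) (1 / 2)) :
    ∑ y' : Bool, ∑ x : Bool, ∑ y : Bool,
      (∑ x' : Bool, bsmsPiBar D (x', y') * bsmsKernel p x x' * bsmsQstar p D y' x y)
        * Real.log (bsmsQstar p D y' x y / bsmsKernel p y y')
      = binaryEntropy (1 - p - D + 2 * p * D) - binaryEntropy D := by
  obtain ⟨hp0, hp1⟩ := hp
  obtain ⟨hD0, hD1⟩ := hD
  have hD1' : D < 1 := by linarith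
  have hp' : (0:ℝ) < 1 - p := by linarith
  have hDD : (0:ℝ) < 1 - D := by linarith
  have hm : (0:ℝ) < 1 - p - D + 2 * p * D := by nlinarith
  have h1m : (0:ℝ) < p + D - 2 * p * D := by nlinarith
  have e1 : bsmsAlpha p D / (1 - p) = (1 - D) / (1 - p - D + 2 * p * D) := by
    unfold bsmsAlpha; field_simp
  have e2 : (1 - bsmsBeta p D) / (1 - p) = D / (p + D - 2 * p * D) := by
    unfold bsmsBeta; rw [one_sub_div h1m.ne', div_div, div_eq_div_iff (mul_pos h1m hp').ne' h1m.ne']; ring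
  have e3 : bsmsBeta p D / p = (1 - D) / (p + D - 2 * p * D) := by
    unfold bsmsBeta; field_simp
  have e4 : (1 - bsmsAlpha p D) / p = D / (1 - p - D + 2 * p * D) := by
    unfold bsmsAlpha; rw [one_sub_div hm.ne', div_div, div_eq_div_iff (mul_pos hm hp0).ne' hm.ne']; ring
  have l1 : Real.log (bsmsAlpha p D / (1 - p))
      = Real.log (1 - D) - Real.log (1 - p - D + 2 * p * D) := by
    rw [e1, Real.log_div hDD.ne' hm.ne']
  have l2 : Real.log ((1 - bsmsBeta p D) / (1 - p))
      = Real.log D - Real.log (p + D - 2 * p * D) := by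
    rw [e2, Real.log_div hD0.ne' h1m.ne']
  have l3 : Real.log (bsmsBeta p D / p)
      = Real.log (1 - D) - Real.log (p + D - 2 * p * D) := by
    rw [e3, Real.log_div hDD.ne' h1m.ne']
  have l4 : Real.log ((1 - bsmsAlpha p D) / p)
      = Real.log D - Real.log (1 - p - D + 2 * p * D) := by
    rw [e4, Real.log_div hD0.ne' hm.ne']
  simp only [Fintype.sum_bool, bsmsQstar, bsmsKernel, bsmsPiBar, if_true, if_false,
    Bool.true_eq_false, Bool.false_eq_true, ite_true, ite_false, binaryEntropy]
  rw [l1, l2, l3, l4]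
  have hc : (1:ℝ) - (1 - p - D + 2 * p * D) = p + D - 2 * p * D := by ring
  rw [hc]
  unfold bsmsAlpha bsmsBeta
  set A := Real.log (1 - D)
  set B := Real.log D
  set M := Real.log (1 - p - D + 2 * p * D)
  set N := Real.log (p + D - 2 * p * D)
  have hm' := hm.ne'
  have h1m' := h1m.ne'
  have hm'' : 1 - p - D + D * 2 * p ≠ 0 := by linarith
  have h1m'' : p + D - D * 2 * p ≠ 0 := by linarith
  field_simp
  ring
end
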